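/- arXiv:1601.04308 — 2 statements merged into one kernel-verified Lean document; each statement's English description precedes it below -/
import Mathlib

section
/- Nonlocal estimate on the logarithmic blow-up function. Let Ω ⊂ ℝ^N be of class W^{2,∞}, assume (M), (J0), (J1). For x̄ ∈ Γ_in let r = r(x̄) be the radius of the W^{2,∞} boundary chart at x̄, and define U_r(x) = −log(d(x)) + (3/2) log r for x ∈ B_r(x̄) ∩ Ω. Then there exists a constant A > 0 such that for every ξ ≤ C_j⁻¹ r/2 and every x ∈ B_{r/2}(x̄) ∩ Ω, one has −I_ξ[U_r](x) ≥ −A d(x)^{−σ}, i.e. I_ξ[U_r](x) ≤ A d(x)^{−σ}. -/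
set_option autoImplicit false

/- Common framework for censored nonlocal Hamilton–Jacobi equations with
Neumann boundary conditions (Barles-type viscosity solutions). -/

open Set Metric MeasureTheory Filter Topology Function
open scoped RealInnerProductSpace NNReal ENNReal

noncomputable section

namespace Censored

abbrev Euc (N : ℕ) : Type := EuclideanSpace ℝ (Fin N)

variable {N : ℕ}

/-- Signed distance to the boundary of `Ω`, positive inside `Ω`. -/
def sdist (Ω : Set (Euc N)) (x : Euc N) : ℝ := infDist x Ωᶜ - infDist x Ω

/-- A modulus of continuity. -/
def IsModulus (ω : ℝ → ℝ) : Prop :=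
  (∀ s, 0 ≤ ω s) ∧ Monotone ω ∧ Tendsto ω (nhdsWithin 0 (Ioi 0)) (nhds 0)

/-- A `W^{2,∞}` boundary chart for `Ω` at `s`, with radius `r`: a diffeomorphism of
class `W^{2,∞}` (i.e. `C^1` with Lipschitz differential, with inverse of the same
regularity) whose `N`-th component coincides with the signed distance. -/
def IsW2Chart (hN : 0 < N) (Ω : Set (Euc N)) (s : Euc N) (r : ℝ)
    (ψ ψinv : Euc N → Euc N) : Prop :=
  0 < r ∧
  ContDiffOn ℝ 1 ψ (ball s r) ∧
  (∃ L : ℝ≥0, LipschitzOnWith L (fun x => fderiv ℝ ψ x) (ball s r)) ∧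
  ContDiffOn ℝ 1 ψinv (ψ '' ball s r) ∧
  (∃ L : ℝ≥0, LipschitzOnWith L (fun x => fderiv ℝ ψinv x) (ψ '' ball s r)) ∧
  (∀ x ∈ ball s r, ψinv (ψ x) = x) ∧
  (∀ x ∈ ball s r, ψ x ⟨N - 1, Nat.sub_lt hN Nat.one_pos⟩ = sdist Ω x)

/-- Assumption (O): `Ω` is open of class `W^{2,∞}`. -/
def IsW2Domain (hN : 0 < N) (Ω : Set (Euc N)) : Prop :=
  IsOpen Ω ∧ ∀ s ∈ frontier Ω, ∃ r ψ ψinv, IsW2Chart hN Ω s r ψ ψinv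

/-- `n` is the exterior unit normal vector field to `∂Ω`:  `n = -D d` where `d` is the
signed distance (positive inside). -/
def IsExteriorNormal (Ω : Set (Euc N)) (n : Euc N → Euc N) : Prop :=
  ∀ x ∈ frontier Ω, ‖n x‖ = 1 ∧ HasGradientAt (sdist Ω) (-(n x)) x

/-- First part of assumption (M): the measures `μ_x` have a (measurable, nonnegative)
density `g x` with respect to Lebesgue measure, bounded by `Cμ |z|^{-(N+σ)}`. -/
def AssumptionM1 (Ω : Set (Euc N)) (g : Euc N → Euc N → ℝ) (Cμ σ : ℝ) : Prop :=
  0 < Cμ ∧ σ ∈ Ioo (0:ℝ) 1 ∧ (∀ x, Measurable (g x)) ∧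
  (∀ x ∈ closure Ω, ∀ z : Euc N, 0 ≤ g x z) ∧
  (∀ x ∈ closure Ω, ∀ z : Euc N, g x z ≤ Cμ * ‖z‖ ^ (-((N : ℝ) + σ)))

/-- Assumption (M). -/
def AssumptionM (Ω : Set (Euc N)) (g : Euc N → Euc N → ℝ) (Cμ Dμ σ : ℝ) : Prop :=
  AssumptionM1 Ω g Cμ σ ∧ 0 < Dμ ∧
  (∀ x ∈ closure Ω, ∀ y ∈ closure Ω, ∀ z : Euc N,
    |g x z - g y z| ≤ Dμ * ‖x - y‖ * ‖z‖ ^ (-((N : ℝ) + σ)))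

/-- Assumption (J0). -/
def AssumptionJ0 (Ω : Set (Euc N)) (j : Euc N → Euc N → Euc N) (Aj : ℝ) : Prop :=
  ∀ x ∈ closure Ω,
    ContDiff ℝ 1 (j x) ∧ Function.Bijective (j x) ∧
    ContDiff ℝ 1 (Function.invFun (j x)) ∧
    ∀ z : Euc N, ‖fderiv ℝ (Function.invFun (j x)) z‖ ≤ Aj

/-- Assumption (J1). -/
def AssumptionJ1 (Ω : Set (Euc N)) (j : Euc N → Euc N → Euc N) (Cj' Cj Dj : ℝ) : Prop :=
  0 < Cj' ∧ 0 < Cj ∧ 0 < Dj ∧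
  (∀ x ∈ closure Ω, ∀ z : Euc N, Cj' * ‖z‖ ≤ ‖j x z‖ ∧ ‖j x z‖ ≤ Cj * ‖z‖) ∧
  (∀ x ∈ closure Ω, ∀ y ∈ closure Ω, ∀ z : Euc N, ‖j x z - j y z‖ ≤ Dj * ‖z‖ * ‖x - y‖)

/-- The truncated censored nonlocal term over `{|z| ≥ ξ}` (`I^ξ`). -/
def Iout (Ω : Set (Euc N)) (j : Euc N → Euc N → Euc N) (g : Euc N → Euc N → ℝ)
    (ξ : ℝ) (u : Euc N → ℝ) (x : Euc N) : ℝ :=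
  ∫ z in {z : Euc N | ξ ≤ ‖z‖ ∧ x + j x z ∈ closure Ω}, (u (x + j x z) - u x) * g x z

/-- The truncated censored nonlocal term over `{|z| < ξ}` (`I_ξ`). -/
def Iin (Ω : Set (Euc N)) (j : Euc N → Euc N → Euc N) (g : Euc N → Euc N → ℝ)
    (ξ : ℝ) (φ : Euc N → ℝ) (x : Euc N) : ℝ :=
  ∫ z in {z : Euc N | ‖z‖ < ξ ∧ x + j x z ∈ closure Ω}, (φ (x + j x z) - φ x) * g x z

/-- The censored nonlocal operator of order `σ < 1`, as a principal value. -/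
def Ipv (Ω : Set (Euc N)) (j : Euc N → Euc N → Euc N) (g : Euc N → Euc N → ℝ)
    (u : Euc N → ℝ) (x : Euc N) : ℝ :=
  limUnder (nhdsWithin (0:ℝ) (Ioi 0)) (fun δ =>
    ∫ z in {z : Euc N | δ < ‖z‖ ∧ x + j x z ∈ closure Ω}, (u (x + j x z) - u x) * g x z)

/-- `u` is bounded on `S`. -/
def BddOn (u : Euc N → ℝ) (S : Set (Euc N)) : Prop := ∃ M, ∀ x ∈ S, |u x| ≤ M

/-- `u = u(x,t)` is bounded on `S × I`. -/
def BddOnT (u : Euc N → ℝ → ℝ) (S : Set (Euc N)) (I : Set ℝ) : Prop :=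
  ∃ M, ∀ x ∈ S, ∀ t ∈ I, |u x t| ≤ M

/-- Viscosity subsolution, with generalized Neumann boundary conditions, of the
stationary equation `F(x, u, Du, I[u]) = 0` in `Ω`, `∂u/∂n = 0` on `∂Ω`,
for the censored operator determined by `j, g` (with constant `Cj` from (J1)). -/
def IsSubSol (Ω : Set (Euc N)) (j : Euc N → Euc N → Euc N) (g : Euc N → Euc N → ℝ)
    (n : Euc N → Euc N) (Cj : ℝ) (F : Euc N → ℝ → Euc N → ℝ → ℝ) (u : Euc N → ℝ) : Prop :=
  ∀ ξ > (0:ℝ), ∀ φ : Euc N → ℝ, ContDiff ℝ 1 φ →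
    ∀ x ∈ closure Ω,
      (∀ y ∈ closedBall x (Cj * ξ) ∩ closure Ω, u y - φ y ≤ u x - φ x) →
      (x ∈ Ω → F x (u x) (gradient φ x) (Iin Ω j g ξ φ x + Iout Ω j g ξ u x) ≤ 0) ∧
      (x ∈ frontier Ω →
        min (F x (u x) (gradient φ x) (Iin Ω j g ξ φ x + Iout Ω j g ξ u x))
          ⟪gradient φ x, n x⟫ ≤ 0)

/-- Viscosity supersolution, with generalized Neumann boundary conditions. -/
def IsSuperSol (Ω : Set (Euc N)) (j : Euc N → Euc N → Euc N) (g : Euc N → Euc N → ℝ)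
    (n : Euc N → Euc N) (Cj : ℝ) (F : Euc N → ℝ → Euc N → ℝ → ℝ) (v : Euc N → ℝ) : Prop :=
  ∀ ξ > (0:ℝ), ∀ φ : Euc N → ℝ, ContDiff ℝ 1 φ →
    ∀ x ∈ closure Ω,
      (∀ y ∈ closedBall x (Cj * ξ) ∩ closure Ω, v x - φ x ≤ v y - φ y) →
      (x ∈ Ω → 0 ≤ F x (v x) (gradient φ x) (Iin Ω j g ξ φ x + Iout Ω j g ξ v x)) ∧
      (x ∈ frontier Ω →
        0 ≤ max (F x (v x) (gradient φ x) (Iin Ω j g ξ φ x + Iout Ω j g ξ v x))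
          ⟪gradient φ x, n x⟫)

/-- `F` corresponding to the stationary equation `u - I[u] + H(x,Du) = 0`. -/
def statF (H : Euc N → Euc N → ℝ) : Euc N → ℝ → Euc N → ℝ → ℝ :=
  fun x r p I => r - I + H x p

/-- `F` corresponding to the ergodic equation `λ - I[w] - H(x,Dw) = 0`. -/
def ergF (H : Euc N → Euc N → ℝ) (lam : ℝ) : Euc N → ℝ → Euc N → ℝ → ℝ :=
  fun x _ p I => lam - I - H x p

/-- Parabolic viscosity subsolution with generalized Neumann boundary conditions,
for `F(x, t, ∂_t u, u, Du, I[u(·,t)]) = 0` in `Ω × (0,∞)`. -/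
def IsParSubSol (Ω : Set (Euc N)) (j : Euc N → Euc N → Euc N) (g : Euc N → Euc N → ℝ)
    (n : Euc N → Euc N) (Cj : ℝ) (F : Euc N → ℝ → ℝ → ℝ → Euc N → ℝ → ℝ)
    (u : Euc N → ℝ → ℝ) : Prop :=
  ∀ ξ > (0:ℝ), ∀ φ : Euc N → ℝ → ℝ,
    ContDiff ℝ 1 (fun q : Euc N × ℝ => φ q.1 q.2) →
    ∀ x ∈ closure Ω, ∀ t ∈ Ioi (0:ℝ),
      (∀ y ∈ closedBall x (Cj * ξ) ∩ closure Ω, ∀ s ∈ Ioi (0:ℝ), |s - t| ≤ ξ →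
        u y s - φ y s ≤ u x t - φ x t) →
      (x ∈ Ω →
        F x t (deriv (φ x) t) (u x t) (gradient (fun y => φ y t) x)
          (Iin Ω j g ξ (fun y => φ y t) x + Iout Ω j g ξ (fun y => u y t) x) ≤ 0) ∧
      (x ∈ frontier Ω →
        min (F x t (deriv (φ x) t) (u x t) (gradient (fun y => φ y t) x)
              (Iin Ω j g ξ (fun y => φ y t) x + Iout Ω j g ξ (fun y => u y t) x))
          ⟪gradient (fun y => φ y t) x, n x⟫ ≤ 0)

/-- Parabolic viscosity supersolution with generalized Neumann boundary conditions. -/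
def IsParSuperSol (Ω : Set (Euc N)) (j : Euc N → Euc N → Euc N) (g : Euc N → Euc N → ℝ)
    (n : Euc N → Euc N) (Cj : ℝ) (F : Euc N → ℝ → ℝ → ℝ → Euc N → ℝ → ℝ)
    (v : Euc N → ℝ → ℝ) : Prop :=
  ∀ ξ > (0:ℝ), ∀ φ : Euc N → ℝ → ℝ,
    ContDiff ℝ 1 (fun q : Euc N × ℝ => φ q.1 q.2) →
    ∀ x ∈ closure Ω, ∀ t ∈ Ioi (0:ℝ),
      (∀ y ∈ closedBall x (Cj * ξ) ∩ closure Ω, ∀ s ∈ Ioi (0:ℝ), |s - t| ≤ ξ →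
        v x t - φ x t ≤ v y s - φ y s) →
      (x ∈ Ω →
        0 ≤ F x t (deriv (φ x) t) (v x t) (gradient (fun y => φ y t) x)
          (Iin Ω j g ξ (fun y => φ y t) x + Iout Ω j g ξ (fun y => v y t) x)) ∧
      (x ∈ frontier Ω →
        0 ≤ max (F x t (deriv (φ x) t) (v x t) (gradient (fun y => φ y t) x)
              (Iin Ω j g ξ (fun y => φ y t) x + Iout Ω j g ξ (fun y => v y t) x))
          ⟪gradient (fun y => φ y t) x, n x⟫)

/-- `F` for the parabolic equation `∂_t u - I[u] + H(x,t,u,Du) = 0`. -/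
def parF (H : Euc N → ℝ → ℝ → Euc N → ℝ) : Euc N → ℝ → ℝ → ℝ → Euc N → ℝ → ℝ :=
  fun x t pt r p I => pt - I + H x t r p

/-! ### Hamiltonians: Bellman form and coercive form (stationary) -/




/-- `H` is of Bellman type with drift `b` and cost `l` over the control set `A`. -/
def IsBellman {A : Type} (b : Euc N → A → Euc N) (l : Euc N → A → ℝ)
    (H : Euc N → Euc N → ℝ) : Prop :=
  ∀ x p, H x p = ⨆ α : A, (-⟪b x α, p⟫ - l x α)

/-- Continuity and boundedness of the Bellman data `b, l`. -/
def BellmanData {A : Type} [TopologicalSpace A]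
    (b : Euc N → A → Euc N) (l : Euc N → A → ℝ) : Prop :=
  Continuous (fun q : Euc N × A => b q.1 q.2) ∧ (∃ M, ∀ x α, ‖b x α‖ ≤ M) ∧
  Continuous (fun q : Euc N × A => l q.1 q.2) ∧ (∃ M, ∀ x α, |l x α| ≤ M)

/-- Assumption (C): uniform continuity of the cost `l`. -/
def AssumptionC (Ω : Set (Euc N)) {A : Type} (l : Euc N → A → ℝ) : Prop :=
  ∃ ω, IsModulus ω ∧ ∀ (α : A), ∀ x ∈ closure Ω, ∀ y ∈ closure Ω,
    |l x α - l y α| ≤ ω ‖x - y‖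

/-- Assumption (L): uniform Lipschitz continuity of the drift `b`. -/
def AssumptionL (Ω : Set (Euc N)) {A : Type} (b : Euc N → A → Euc N) : Prop :=
  ∃ C > (0:ℝ), ∀ (α : A), ∀ x ∈ closure Ω, ∀ y ∈ closure Ω,
    ‖b x α - b y α‖ ≤ C * ‖x - y‖

/-- The part of the boundary where the drift points inwards for every control. -/
def GammaIn (Ω : Set (Euc N)) (n : Euc N → Euc N) {A : Type}
    (b : Euc N → A → Euc N) : Set (Euc N) :=
  {x | x ∈ frontier Ω ∧ ∀ α : A, ⟪b x α, n x⟫ < 0}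

/-- The part of the boundary where the drift points outwards for every control. -/
def GammaOut (Ω : Set (Euc N)) (n : Euc N → Euc N) {A : Type}
    (b : Euc N → A → Euc N) : Set (Euc N) :=
  {x | x ∈ frontier Ω ∧ ∀ α : A, 0 < ⟪b x α, n x⟫}

/-- The part of the boundary where the drift points both inwards and outwards. -/
def GammaMix (Ω : Set (Euc N)) (n : Euc N → Euc N) {A : Type}
    (b : Euc N → A → Euc N) : Set (Euc N) :=
  {x | x ∈ frontier Ω ∧ ∃ α₁ α₂ : A, ⟪b x α₁, n x⟫ < 0 ∧ 0 < ⟪b x α₂, n x⟫}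

/-- `S` is a union of connected components of `T`. -/
def IsUnionOfComponents (S T : Set (Euc N)) : Prop :=
  S ⊆ T ∧ ∀ x ∈ S, connectedComponentIn T x ⊆ S

/-- Assumption (B). -/
def AssumptionB (Ω : Set (Euc N)) (n : Euc N → Euc N) {A : Type}
    (b : Euc N → A → Euc N) : Prop :=
  GammaIn Ω n b ∪ GammaOut Ω n b ∪ GammaMix Ω n b = frontier Ω ∧
  IsUnionOfComponents (GammaIn Ω n b) (frontier Ω) ∧
  IsUnionOfComponents (GammaOut Ω n b) (frontier Ω) ∧
  IsUnionOfComponents (GammaMix Ω n b) (frontier Ω)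

/-- All the structural assumptions on a Bellman Hamiltonian: (C), (L), (B) together
with continuity and boundedness of the data. -/
def StatBellmanOK (Ω : Set (Euc N)) (n : Euc N → Euc N) {A : Type} [TopologicalSpace A]
    (b : Euc N → A → Euc N) (l : Euc N → A → ℝ) (H : Euc N → Euc N → ℝ) : Prop :=
  BellmanData b l ∧ IsBellman b l H ∧ AssumptionC Ω l ∧ AssumptionL Ω b ∧ AssumptionB Ω n b

/-- Assumption (H1): superfractional coercivity of order `m > σ`. -/
def AssumptionH1 (Ω : Set (Euc N)) (H : Euc N → Euc N → ℝ) (σ m c₀ D : ℝ) : Prop :=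
  σ < m ∧ 0 < c₀ ∧ 0 < D ∧ ∀ x ∈ closure Ω, ∀ p : Euc N, c₀ * ‖p‖ ^ m - D ≤ H x p

/-- Assumption (Ha) (sublinear case) with constant `C` and modulus `ω₁`. -/
def AssumptionHa (H : Euc N → Euc N → ℝ) (C : ℝ) (ω₁ : ℝ → ℝ) : Prop :=
  0 < C ∧ IsModulus ω₁ ∧
  ∀ x y p q : Euc N, H y p - H x q ≤ ω₁ ‖x - y‖ * (1 + ‖p‖) + C * ‖p - q‖

/-- Assumption (Hb) (superlinear case) with constants `m, A, Cb`. -/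
def AssumptionHb (H : Euc N → Euc N → ℝ) (m A Cb : ℝ) : Prop :=
  1 < m ∧ 0 < A ∧ 0 < Cb ∧
  ∀ μ ∈ Ioo (0:ℝ) 1, ∀ x p : Euc N,
    H x p - μ * H x (μ⁻¹ • p) ≤ (1 - μ) * (Cb * (1 - m) * ‖p‖ ^ m + A)

/-- Assumption (Hc) with constant `C` and modulus `ω₁`. -/
def AssumptionHc (H : Euc N → Euc N → ℝ) (m C : ℝ) (ω₁ : ℝ → ℝ) : Prop :=
  0 < C ∧ IsModulus ω₁ ∧
  ∀ x y p q : Euc N,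
    H y p - H x q ≤ ω₁ ‖x - y‖ * (1 + (max ‖p‖ ‖q‖) ^ m)
      + C * ‖p - q‖ * (max ‖p‖ ‖q‖) ^ (m - 1)

/-- The structural assumptions on a coercive Hamiltonian:
(H1), (Ha) (sublinear) or (H1), (Hb), (Hc) (superlinear). -/
def StatCoerciveOK (Ω : Set (Euc N)) (H : Euc N → Euc N → ℝ) (σ : ℝ) : Prop :=
  ∃ m c₀ D, AssumptionH1 Ω H σ m c₀ D ∧
    ((m ≤ 1 ∧ ∃ C ω₁, AssumptionHa H C ω₁) ∨
     (∃ A Cb, AssumptionHb H m A Cb ∧ ∃ C ω₁, AssumptionHc H m C ω₁))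

/-- Assumption (E). -/
def AssumptionE (Ω : Set (Euc N)) (H : Euc N → Euc N → ℝ) : Prop :=
  ∀ R > (0:ℝ), ∃ HR : ℝ, ∀ x ∈ closure Ω, ∀ p : Euc N, ‖p‖ ≤ R → |H x p| ≤ HR

/-! ### Parabolic Hamiltonians and assumptions -/

/-- `H(x,t,r,p)` is of (time-dependent) Bellman type. -/
def IsParBellman {A : Type} (lam : Euc N → ℝ → A → ℝ) (b : Euc N → ℝ → A → Euc N)
    (l : Euc N → ℝ → A → ℝ) (H : Euc N → ℝ → ℝ → Euc N → ℝ) : Prop :=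
  ∀ x t r p, H x t r p = ⨆ α : A, (lam x t α * r - ⟪b x t α, p⟫ - l x t α)

/-- Continuity and boundedness of the parabolic Bellman data. -/
def ParBellmanData {A : Type} [TopologicalSpace A] (lam : Euc N → ℝ → A → ℝ)
    (b : Euc N → ℝ → A → Euc N) (l : Euc N → ℝ → A → ℝ) : Prop :=
  Continuous (fun q : Euc N × ℝ × A => lam q.1 q.2.1 q.2.2) ∧
  (∃ M, ∀ x t α, |lam x t α| ≤ M) ∧
  Continuous (fun q : Euc N × ℝ × A => b q.1 q.2.1 q.2.2) ∧
  (∃ M, ∀ x t α, ‖b x t α‖ ≤ M) ∧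
  Continuous (fun q : Euc N × ℝ × A => l q.1 q.2.1 q.2.2) ∧
  (∃ M, ∀ x t α, |l x t α| ≤ M)

/-- Assumption (C'): uniform continuity of `l` and `λ` in `(x,t)`, uniformly in `α`. -/
def AssumptionC' (Ω : Set (Euc N)) {A : Type} (lam l : Euc N → ℝ → A → ℝ) : Prop :=
  (∃ ω, IsModulus ω ∧ ∀ (α : A), ∀ x ∈ closure Ω, ∀ y ∈ closure Ω,
      ∀ t ∈ Ici (0:ℝ), ∀ s ∈ Ici (0:ℝ), |l x t α - l y s α| ≤ ω (‖x - y‖ + |t - s|)) ∧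
  (∃ ω, IsModulus ω ∧ ∀ (α : A), ∀ x ∈ closure Ω, ∀ y ∈ closure Ω,
      ∀ t ∈ Ici (0:ℝ), ∀ s ∈ Ici (0:ℝ), |lam x t α - lam y s α| ≤ ω (‖x - y‖ + |t - s|))

/-- Assumption (L'): uniform Lipschitz continuity of the drift `b` in `(x,t)`. -/
def AssumptionL' (Ω : Set (Euc N)) {A : Type} (b : Euc N → ℝ → A → Euc N) : Prop :=
  ∃ C > (0:ℝ), ∀ (α : A), ∀ x ∈ closure Ω, ∀ y ∈ closure Ω, ∀ s ∈ Ici (0:ℝ), ∀ t ∈ Ici (0:ℝ),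
    ‖b x s α - b y t α‖ ≤ C * (‖x - y‖ + |s - t|)

/-- Inward part of the boundary for time-dependent drift. -/
def GammaInT (Ω : Set (Euc N)) (n : Euc N → Euc N) {A : Type}
    (b : Euc N → ℝ → A → Euc N) : Set (Euc N) :=
  {x | x ∈ frontier Ω ∧ ∀ t ∈ Ici (0:ℝ), ∀ α : A, ⟪b x t α, n x⟫ < 0}

/-- Outward part of the boundary for time-dependent drift. -/
def GammaOutT (Ω : Set (Euc N)) (n : Euc N → Euc N) {A : Type}
    (b : Euc N → ℝ → A → Euc N) : Set (Euc N) :=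
  {x | x ∈ frontier Ω ∧ ∀ t ∈ Ici (0:ℝ), ∀ α : A, 0 < ⟪b x t α, n x⟫}

/-- Mixed part of the boundary for time-dependent drift. -/
def GammaMixT (Ω : Set (Euc N)) (n : Euc N → Euc N) {A : Type}
    (b : Euc N → ℝ → A → Euc N) : Set (Euc N) :=
  {x | x ∈ frontier Ω ∧ ∀ t ∈ Ici (0:ℝ),
    ∃ α₁ α₂ : A, ⟪b x t α₁, n x⟫ < 0 ∧ 0 < ⟪b x t α₂, n x⟫}

/-- Assumption (B'). -/
def AssumptionB' (Ω : Set (Euc N)) (n : Euc N → Euc N) {A : Type}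
    (b : Euc N → ℝ → A → Euc N) : Prop :=
  GammaInT Ω n b ∪ GammaOutT Ω n b ∪ GammaMixT Ω n b = frontier Ω ∧
  IsUnionOfComponents (GammaInT Ω n b) (frontier Ω) ∧
  IsUnionOfComponents (GammaOutT Ω n b) (frontier Ω) ∧
  IsUnionOfComponents (GammaMixT Ω n b) (frontier Ω)

/-- All the structural assumptions on a parabolic Bellman Hamiltonian: (C'), (L'), (B'). -/
def ParBellmanOK (Ω : Set (Euc N)) (n : Euc N → Euc N) {A : Type} [TopologicalSpace A]
    (lam : Euc N → ℝ → A → ℝ) (b : Euc N → ℝ → A → Euc N) (l : Euc N → ℝ → A → ℝ)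
    (H : Euc N → ℝ → ℝ → Euc N → ℝ) : Prop :=
  ParBellmanData lam b l ∧ IsParBellman lam b l H ∧
  AssumptionC' Ω lam l ∧ AssumptionL' Ω b ∧ AssumptionB' Ω n b

/-- Assumption (H'): monotonicity of `H` in the `u` variable. -/
def AssumptionH' (Ω : Set (Euc N)) (H : Euc N → ℝ → ℝ → Euc N → ℝ) : Prop :=
  ∃ K : ℝ, ∀ R > (0:ℝ), ∃ γ, -K ≤ γ ∧
    ∀ x ∈ closure Ω, ∀ t ∈ Icc (0:ℝ) R, ∀ r s : ℝ, |r| ≤ R → |s| ≤ R → s ≤ r →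
      ∀ p : Euc N, γ * (r - s) ≤ H x t r p - H x t s p

/-- Assumption (H''): the monotonicity constants `γ_R` are bounded below by some `γ₀ > 0`. -/
def AssumptionH'' (Ω : Set (Euc N)) (H : Euc N → ℝ → ℝ → Euc N → ℝ) : Prop :=
  ∃ γ₀ > (0:ℝ), ∀ R > (0:ℝ), ∃ γ, γ₀ ≤ γ ∧
    ∀ x ∈ closure Ω, ∀ t ∈ Icc (0:ℝ) R, ∀ r s : ℝ, |r| ≤ R → |s| ≤ R → s ≤ r →
      ∀ p : Euc N, γ * (r - s) ≤ H x t r p - H x t s p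

/-- Assumption (E'). -/
def AssumptionE' (Ω : Set (Euc N)) (H : Euc N → ℝ → ℝ → Euc N → ℝ) : Prop :=
  ∀ T > (0:ℝ), ∀ R > (0:ℝ), ∃ HR : ℝ, ∀ x ∈ Ω, ∀ t ∈ Icc (0:ℝ) T, ∀ r : ℝ, ∀ p : Euc N,
    |r| ≤ R → ‖p‖ ≤ R → |H x t r p| ≤ HR

/-- Assumption (H0'): separated structure `H(x,t,r,p) = H₀(x,r,p) - f(x,t)`. -/
def AssumptionH0' (H : Euc N → ℝ → ℝ → Euc N → ℝ) : Prop :=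
  ∃ (H₀ : Euc N → ℝ → Euc N → ℝ) (f : Euc N → ℝ → ℝ),
    Continuous (fun q : Euc N × ℝ × Euc N => H₀ q.1 q.2.1 q.2.2) ∧
    UniformContinuous (fun q : Euc N × ℝ => f q.1 q.2) ∧
    (∃ M, ∀ x t, |f x t| ≤ M) ∧
    ∀ x t r p, H x t r p = H₀ x r p - f x t

/-- Assumption (He'): `H` satisfies (H1), (Ha) in `x`, uniformly in `t`
and uniformly on compact sets in `r` (sublinearly coercive case). -/
def AssumptionHe' (Ω : Set (Euc N)) (H : Euc N → ℝ → ℝ → Euc N → ℝ) (σ : ℝ) : Prop :=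
  ∃ m : ℝ, σ < m ∧ m ≤ 1 ∧
    ∀ R > (0:ℝ),
      (∃ c₀ > (0:ℝ), ∃ D > (0:ℝ), ∀ x ∈ closure Ω, ∀ t ∈ Ici (0:ℝ), ∀ r : ℝ, |r| ≤ R →
        ∀ p : Euc N, c₀ * ‖p‖ ^ m - D ≤ H x t r p) ∧
      (∃ C > (0:ℝ), ∃ ω₁, IsModulus ω₁ ∧ ∀ x y : Euc N, ∀ t ∈ Ici (0:ℝ), ∀ r : ℝ, |r| ≤ R →
        ∀ p q : Euc N, H y t r p - H x t r q ≤ ω₁ ‖x - y‖ * (1 + ‖p‖) + C * ‖p - q‖)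

/-- Assumption (He''): `H` satisfies (H1), (Hb), (Hc) in `x`, uniformly in `t`
and uniformly on compact sets in `r` (superlinearly coercive case, exponent `m`). -/
def AssumptionHe'' (Ω : Set (Euc N)) (H : Euc N → ℝ → ℝ → Euc N → ℝ) (σ m : ℝ) : Prop :=
  1 < m ∧ σ < m ∧
  ∀ R > (0:ℝ),
    (∃ c₀ > (0:ℝ), ∃ D > (0:ℝ), ∀ x ∈ closure Ω, ∀ t ∈ Ici (0:ℝ), ∀ r : ℝ, |r| ≤ R →
      ∀ p : Euc N, c₀ * ‖p‖ ^ m - D ≤ H x t r p) ∧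
    (∃ A > (0:ℝ), ∃ Cb > (0:ℝ), ∀ μ ∈ Ioo (0:ℝ) 1, ∀ x ∈ closure Ω, ∀ t ∈ Ici (0:ℝ),
      ∀ r : ℝ, |r| ≤ R → ∀ p : Euc N,
        H x t r p - μ * H x t r (μ⁻¹ • p) ≤ (1 - μ) * (Cb * (1 - m) * ‖p‖ ^ m + A)) ∧
    (∃ C > (0:ℝ), ∃ ω₁, IsModulus ω₁ ∧ ∀ x y : Euc N, ∀ t ∈ Ici (0:ℝ), ∀ r : ℝ, |r| ≤ R →
      ∀ p q : Euc N, H y t r p - H x t r q ≤ ω₁ ‖x - y‖ * (1 + (max ‖p‖ ‖q‖) ^ m)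
        + C * ‖p - q‖ * (max ‖p‖ ‖q‖) ^ (m - 1))

/-- Structural parabolic coercive assumptions: (H0') and (He') or (He''). -/
def ParCoerciveOK (Ω : Set (Euc N)) (H : Euc N → ℝ → ℝ → Euc N → ℝ) (σ : ℝ) : Prop :=
  AssumptionH0' H ∧ (AssumptionHe' Ω H σ ∨ ∃ m, AssumptionHe'' Ω H σ m)

/-! ### Iterative covering property -/

/-- The iterated reachable sets `X_r(x)` of the censored jump process. -/
def Xiter (Ω : Set (Euc N)) (j : Euc N → Euc N → Euc N) (g : Euc N → Euc N → ℝ)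
    (x : Euc N) : ℕ → Set (Euc N)
  | 0 => {x}
  | r + 1 => (⋃ ξ ∈ Xiter Ω j g x r,
      (fun z => ξ + j ξ z) '' closure (Function.support (g ξ))) ∩ closure Ω

/-- Iterative covering property: `𝒳(x) = Ω` (i.e. the closure of the reachable set
is all of `closure Ω`) for every `x ∈ Ω`. -/
def CoveringProperty (Ω : Set (Euc N)) (j : Euc N → Euc N → Euc N)
    (g : Euc N → Euc N → ℝ) : Prop :=
  ∀ x ∈ Ω, closure (⋃ r : ℕ, Xiter Ω j g x r) = closure Ω



/-- Bochner integral is at most the toReal of the lintegral of the positive part. -/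
lemma integral_le_toReal_lintegral {α : Type*} [MeasurableSpace α] (μ : Measure α)
    (f : α → ℝ) : ∫ a, f a ∂μ ≤ (∫⁻ a, ENNReal.ofReal (f a) ∂μ).toReal := by
  by_cases hf : Integrable f μ
  · rw [integral_eq_lintegral_pos_part_sub_lintegral_neg_part hf]
    exact sub_le_self _ ENNReal.toReal_nonneg
  · rw [integral_undef hf]
    exact ENNReal.toReal_nonneg

/-- lintegral over a set bounded via a pointwise bound and a measure bound. -/
lemma setLIntegral_le_const_mul {α : Type*} [MeasurableSpace α] {μ : Measure α}
    {T : Set α} (hT : MeasurableSet T) {f : α → ℝ≥0∞} {a V : ℝ≥0∞}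
    (hf : ∀ y ∈ T, f y ≤ a) (hV : μ T ≤ V) :
    ∫⁻ y in T, f y ∂μ ≤ a * V := by
  calc ∫⁻ y in T, f y ∂μ ≤ ∫⁻ _ in T, a ∂μ := setLIntegral_mono' hT hf
  _ = a * μ T := setLIntegral_const T a
  _ ≤ a * V := by gcongr

/-- Geometric-series summation over a countable shell decomposition. -/
lemma lintegral_le_of_shells {α : Type*} [MeasurableSpace α] {μ : Measure α}
    {S : Set α} {T : ℕ → Set α} {f : α → ℝ≥0∞} {C0 : ℝ≥0∞} {c q : ℝ}
    (hcov : S ⊆ ⋃ k, T k) (hc : 0 ≤ c) (hq0 : 0 ≤ q) (hq1 : q < 1)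
    (hb : ∀ k : ℕ, ∫⁻ y in T k, f y ∂μ ≤ C0 * ENNReal.ofReal (c * q ^ k)) :
    ∫⁻ y in S, f y ∂μ ≤ C0 * ENNReal.ofReal c * (1 - ENNReal.ofReal q)⁻¹ := by
  calc ∫⁻ y in S, f y ∂μ ≤ ∫⁻ y in ⋃ k, T k, f y ∂μ := lintegral_mono_set hcov
  _ ≤ ∑' k, ∫⁻ y in T k, f y ∂μ := lintegral_iUnion_le _ _
  _ ≤ ∑' k, C0 * ENNReal.ofReal (c * q ^ k) := ENNReal.tsum_le_tsum hb
  _ = C0 * ENNReal.ofReal c * ∑' k, (ENNReal.ofReal q) ^ k := by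
      rw [← ENNReal.tsum_mul_left]
      congr 1; funext k
      rw [ENNReal.ofReal_mul hc, ENNReal.ofReal_pow hq0, mul_assoc]
  _ = C0 * ENNReal.ofReal c * (1 - ENNReal.ofReal q)⁻¹ := by
      rw [ENNReal.tsum_geometric]

/-- The inverse appearing in geometric series bounds is finite. -/
lemma geom_inv_ne_top {q : ℝ} (hq1 : q < 1) : (1 - ENNReal.ofReal q)⁻¹ ≠ ∞ := by
  rw [Ne, ENNReal.inv_eq_top, tsub_eq_zero_iff_le]
  intro h
  have := ENNReal.one_le_ofReal.mp h
  linarith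

/-- Dyadic decomposition, downward. -/
lemma exists_dyadic_down {u T : ℝ} (hu : 0 < u) (h : u ≤ T) :
    ∃ k : ℕ, (1/2 : ℝ) ^ (k+1) * T < u ∧ u ≤ (1/2 : ℝ) ^ k * T := by
  have hT : 0 < T := lt_of_lt_of_le hu h
  have hex : ∃ k : ℕ, (1/2 : ℝ) ^ (k+1) * T < u := by
    obtain ⟨k, hk⟩ := exists_pow_lt_of_lt_one (div_pos hu hT) (by norm_num : (1/2 : ℝ) < 1)
    exact ⟨k, by
      have := mul_lt_mul_of_pos_right hk hT
      calc (1/2:ℝ)^(k+1) * T ≤ (1/2:ℝ)^k * T := by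
            apply mul_le_mul_of_nonneg_right _ hT.le
            exact pow_le_pow_of_le_one (by norm_num) (by norm_num) (Nat.le_succ k)
      _ < u / T * T := this
      _ = u := div_mul_cancel₀ u hT.ne'⟩
  classical
  let k := Nat.find hex
  refine ⟨k, Nat.find_spec hex, ?_⟩
  rcases Nat.eq_zero_or_pos k with hk0 | hk0
  · rw [hk0]; simpa using h
  · have := Nat.find_min hex (m := k - 1) (by omega)
    push_neg at this
    have hk1 : k - 1 + 1 = k := by omega
    rwa [hk1] at this

/-- Dyadic decomposition, upward. -/
lemma exists_dyadic_up {u R : ℝ} (hR : 0 < R) (h : R ≤ u) :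
    ∃ k : ℕ, (2:ℝ) ^ k * R ≤ u ∧ u < (2:ℝ) ^ (k+1) * R := by
  have hex : ∃ k : ℕ, u < (2:ℝ) ^ (k+1) * R := by
    obtain ⟨k, hk⟩ := pow_unbounded_of_one_lt (u / R) (by norm_num : (1:ℝ) < 2)
    refine ⟨k, ?_⟩
    have h2 : u / R < 2 ^ (k+1) := lt_of_lt_of_le hk (by
      apply pow_le_pow_right₀ (by norm_num) (Nat.le_succ k))
    calc u = u / R * R := (div_mul_cancel₀ u hR.ne').symm
    _ < 2^(k+1) * R := mul_lt_mul_of_pos_right h2 hR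
  classical
  let k := Nat.find hex
  refine ⟨k, ?_, Nat.find_spec hex⟩
  rcases Nat.eq_zero_or_pos k with hk0 | hk0
  · rw [hk0]; simpa using h
  · have := Nat.find_min hex (m := k - 1) (by omega)
    push_neg at this
    have hk1 : k - 1 + 1 = k := by omega
    rwa [hk1] at this

/-- `(x^k)^c = (x^c)^k` for nonnegative real base. -/
lemma rpow_pow_comm {x : ℝ} (hx : 0 ≤ x) (k : ℕ) (c : ℝ) :
    ((x ^ k : ℝ)) ^ c = (x ^ c) ^ k := by
  rw [← Real.rpow_natCast x k, ← Real.rpow_mul hx, mul_comm, Real.rpow_mul hx,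
    Real.rpow_natCast]

/-- The determinant of a continuous linear endomorphism of Euclidean space is bounded by
the `N`-th power of its operator norm. -/
lemma abs_det_le_pow_opNorm (B : Euc N →L[ℝ] Euc N) :
    |B.det| ≤ ‖B‖ ^ N := by
  have him : (B : Euc N →ₗ[ℝ] Euc N) '' closedBall 0 1 ⊆ closedBall 0 ‖B‖ := by
    rintro _ ⟨v, hv, rfl⟩
    simp only [mem_closedBall, dist_zero_right] at hv ⊢
    calc ‖B v‖ ≤ ‖B‖ * ‖v‖ := B.le_opNorm v
    _ ≤ ‖B‖ * 1 := by
        apply mul_le_mul_of_nonneg_left hv (norm_nonneg B)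
    _ = ‖B‖ := mul_one _
  have h2 := measure_mono (μ := (volume : Measure (Euc N))) him
  rw [Measure.addHaar_image_linearMap] at h2
  rw [Measure.addHaar_closedBall' volume (0 : Euc N) (norm_nonneg B)] at h2
  have hcb1 : (volume : Measure (Euc N)) (closedBall 0 1) ≠ 0 :=
    (measure_closedBall_pos volume (0 : Euc N) one_pos).ne'
  have hcbt : (volume : Measure (Euc N)) (closedBall 0 1) ≠ ∞ :=
    measure_closedBall_lt_top.ne
  rw [ENNReal.mul_le_mul_iff_left hcb1 hcbt] at h2
  have := ENNReal.ofReal_le_ofReal_iff (by positivity : (0:ℝ) ≤ ‖B‖ ^ Module.finrank ℝ (Euc N))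
    |>.mp h2
  calc |B.det| ≤ ‖B‖ ^ Module.finrank ℝ (Euc N) := this
  _ = ‖B‖ ^ N := by rw [finrank_euclideanSpace_fin]




-- assume part1 lemmas available:
/-- Shell term algebra, variant A. -/
lemma shell_geomA {b R : ℝ} (hb : 0 < b) (hR : 0 < R) (β : ℝ) (M : ℕ) (k : ℕ) :
    ((b^(k+1)*R) ^ β) * ((b^k*R)^M : ℝ)
      = b ^ β * R ^ (β + (M:ℝ)) * (b ^ (β + (M:ℝ)))^k := by
  induction k with
  | zero =>
      rw [pow_one, pow_zero, one_mul, Real.mul_rpow hb.le hR.le, pow_zero, mul_one,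
        Real.rpow_add hR, Real.rpow_natCast]
      ring
  | succ k ih =>
      have e1 : ((b^(k+1+1)*R : ℝ)) ^ β = b ^ β * ((b^(k+1)*R) ^ β) := by
        rw [show (b^(k+1+1)*R : ℝ) = b*(b^(k+1)*R) by ring,
          Real.mul_rpow hb.le (by positivity)]
      have e2 : ((b^(k+1)*R : ℝ)) ^ M = b ^ M * ((b^k*R) ^ M) := by
        rw [show (b^(k+1)*R : ℝ) = b*(b^k*R) by ring, mul_pow]
      rw [e1, e2]
      have e3 : (b:ℝ) ^ β * b ^ M = b ^ (β + (M:ℝ)) := by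
        rw [← Real.rpow_natCast b M, ← Real.rpow_add hb]
      calc b ^ β * ((b^(k+1)*R) ^ β) * ((b ^ M) * ((b^k*R) ^ M))
          = (b ^ β * b ^ M) * (((b^(k+1)*R) ^ β) * ((b^k*R) ^ M)) := by ring
        _ = b ^ (β + (M:ℝ)) * (b ^ β * R ^ (β + (M:ℝ)) * (b ^ (β + (M:ℝ))) ^ k) := by
            rw [e3, ih]
        _ = b ^ β * R ^ (β + (M:ℝ)) * (b ^ (β + (M:ℝ))) ^ (k+1) := by
            rw [pow_succ]; ring

/-- Shell term algebra, variant B. -/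
lemma shell_geomB {b R : ℝ} (hb : 0 < b) (hR : 0 < R) (β : ℝ) (M : ℕ) (k : ℕ) :
    ((b^k*R) ^ β) * ((b^(k+1)*R)^M : ℝ)
      = b ^ (M:ℝ) * R ^ (β + (M:ℝ)) * (b ^ (β + (M:ℝ)))^k := by
  induction k with
  | zero =>
      rw [pow_zero, one_mul, pow_one, mul_pow, Real.rpow_add hR, Real.rpow_natCast,
        Real.rpow_natCast]
      ring
  | succ k ih =>
      have e1 : ((b^(k+1)*R : ℝ)) ^ β = b ^ β * ((b^k*R) ^ β) := by
        rw [show (b^(k+1)*R : ℝ) = b*(b^k*R) by ring,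
          Real.mul_rpow hb.le (by positivity)]
      have e2 : ((b^(k+1+1)*R : ℝ)) ^ M = b ^ M * ((b^(k+1)*R) ^ M) := by
        rw [show (b^(k+1+1)*R : ℝ) = b*(b^(k+1)*R) by ring, mul_pow]
      rw [e1, e2]
      have e3 : (b:ℝ) ^ β * b ^ M = b ^ (β + (M:ℝ)) := by
        rw [← Real.rpow_natCast b M, ← Real.rpow_add hb]
      calc b ^ β * ((b^k*R) ^ β) * ((b ^ M) * ((b^(k+1)*R) ^ M))
          = (b ^ β * b ^ M) * (((b^k*R) ^ β) * ((b^(k+1)*R) ^ M)) := by ring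
        _ = b ^ (β + (M:ℝ)) * (b ^ (M:ℝ) * R ^ (β + (M:ℝ)) * (b ^ (β + (M:ℝ))) ^ k) := by
            rw [e3, ih]
        _ = b ^ (M:ℝ) * R ^ (β + (M:ℝ)) * (b ^ (β + (M:ℝ))) ^ (k+1) := by
            rw [pow_succ]; ring

/-- Shell term algebra, variant C. -/
lemma shell_geomC {b t : ℝ} (hb : 0 < b) (ht : 0 < t) (γ : ℝ) (m : ℕ) :
    ((b^(m+1)*t) ^ γ) * (b^m*t)
      = b ^ γ * t ^ (γ + 1) * (b ^ (γ + 1))^m := by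
  have := shell_geomA hb ht γ 1 m
  simpa [pow_one] using this

/-- `∫_{B_R(x)} |y-x|^β dy ≲ R^{β+N}` for `-N < β < 0`. -/
lemma lintegral_rpow_dist_closedBall (hN : 0 < N) {β : ℝ} (hβN : -(N:ℝ) < β) (hβ0 : β < 0) :
    ∃ C : ℝ≥0∞, C ≠ ∞ ∧ ∀ (x : Euc N) (R : ℝ), 0 < R →
      ∫⁻ y in closedBall x R, ENNReal.ofReal (dist y x ^ β)
        ≤ C * ENNReal.ofReal (R ^ (β + (N:ℝ))) := by
  classical
  set vB : ℝ≥0∞ := volume (closedBall (0 : Euc N) 1) with hvB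
  have hvBt : vB ≠ ∞ := measure_closedBall_lt_top.ne
  set q : ℝ := (1/2 : ℝ) ^ (β + (N:ℝ)) with hqdef
  have hq0 : 0 ≤ q := Real.rpow_nonneg (by norm_num) _
  have hq1 : q < 1 := Real.rpow_lt_one (by norm_num) (by norm_num) (by linarith)
  refine ⟨ENNReal.ofReal ((1/2:ℝ) ^ β) * vB * (1 - ENNReal.ofReal q)⁻¹, ?_, ?_⟩
  · exact ENNReal.mul_ne_top (ENNReal.mul_ne_top ENNReal.ofReal_ne_top hvBt)
      (geom_inv_ne_top hq1)
  intro x R hR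
  have hdistm : Measurable fun y : Euc N => dist y x :=
    (continuous_id.dist continuous_const).measurable
  set T : ℕ → Set (Euc N) :=
    fun k => {y | (1/2:ℝ)^(k+1) * R < dist y x ∧ dist y x ≤ (1/2:ℝ)^k * R} with hT
  have hTmeas : ∀ k, MeasurableSet (T k) := by
    intro k
    exact (measurableSet_lt measurable_const hdistm).inter
      (measurableSet_le hdistm measurable_const)
  have hcov : closedBall x R ⊆ {x} ∪ ⋃ k, T k := by
    intro y hy
    rcases eq_or_ne y x with h | h
    · exact Or.inl (by simp [h])
    · refine Or.inr (mem_iUnion.2 ?_)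
      have h1 : 0 < dist y x := dist_pos.2 h
      have h2 : dist y x ≤ R := mem_closedBall.1 hy
      obtain ⟨k, hk1, hk2⟩ := exists_dyadic_down h1 h2
      exact ⟨k, hk1, hk2⟩
  have hsing : ∫⁻ y in {x}, ENNReal.ofReal (dist y x ^ β) ≤ 0 := by
    have := setLIntegral_le_const_mul (μ := volume) (measurableSet_singleton x)
      (f := fun y => ENNReal.ofReal (dist y x ^ β)) (a := 0) (V := volume {x})
      (fun y hy => by
        simp only [mem_singleton_iff] at hy
        simp [hy, Real.zero_rpow hβ0.ne]) le_rfl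
    simpa using this
  have hshell : ∀ k : ℕ, ∫⁻ y in T k, ENNReal.ofReal (dist y x ^ β)
      ≤ vB * ENNReal.ofReal (((1/2:ℝ)^β * R^(β+(N:ℝ))) * q ^ k) := by
    intro k
    have hbk : (0:ℝ) < (1/2:ℝ)^(k+1) * R := by positivity
    have hpt : ∀ y ∈ T k, ENNReal.ofReal (dist y x ^ β)
        ≤ ENNReal.ofReal (((1/2:ℝ)^(k+1) * R) ^ β) := by
      intro y hy
      exact ENNReal.ofReal_le_ofReal
        (Real.rpow_le_rpow_of_nonpos hbk hy.1.le hβ0.le)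
    have hvol : volume (T k) ≤ ENNReal.ofReal (((1/2:ℝ)^k * R) ^ N) * vB := by
      have hsub : T k ⊆ closedBall x ((1/2:ℝ)^k * R) := fun y hy => mem_closedBall.2 hy.2
      calc volume (T k) ≤ volume (closedBall x ((1/2:ℝ)^k * R)) := measure_mono hsub
      _ = ENNReal.ofReal (((1/2:ℝ)^k * R) ^ Module.finrank ℝ (Euc N)) * vB :=
          Measure.addHaar_closedBall' volume x (by positivity)
      _ = ENNReal.ofReal (((1/2:ℝ)^k * R) ^ N) * vB := by rw [finrank_euclideanSpace_fin]
    calc ∫⁻ y in T k, ENNReal.ofReal (dist y x ^ β)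
        ≤ ENNReal.ofReal (((1/2:ℝ)^(k+1) * R) ^ β)
            * (ENNReal.ofReal (((1/2:ℝ)^k * R) ^ N) * vB) :=
          setLIntegral_le_const_mul (hTmeas k) hpt hvol
      _ = ENNReal.ofReal ((((1/2:ℝ)^(k+1) * R) ^ β) * (((1/2:ℝ)^k * R) ^ N)) * vB := by
          rw [ENNReal.ofReal_mul (by positivity), mul_assoc]
      _ = vB * ENNReal.ofReal (((1/2:ℝ)^β * R^(β+(N:ℝ))) * q ^ k) := by
          rw [shell_geomA (by norm_num : (0:ℝ) < 1/2) hR β N k, mul_comm, mul_assoc]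
  have hmain := lintegral_le_of_shells (μ := volume)
    (S := ⋃ k, T k) (T := T) (f := fun y => ENNReal.ofReal (dist y x ^ β))
    (C0 := vB) (c := (1/2:ℝ)^β * R^(β+(N:ℝ))) (q := q)
    (le_refl _) (by positivity) hq0 hq1 hshell
  calc ∫⁻ y in closedBall x R, ENNReal.ofReal (dist y x ^ β)
      ≤ ∫⁻ y in {x} ∪ ⋃ k, T k, ENNReal.ofReal (dist y x ^ β) := lintegral_mono_set hcov
    _ ≤ (∫⁻ y in {x}, ENNReal.ofReal (dist y x ^ β))
        + ∫⁻ y in ⋃ k, T k, ENNReal.ofReal (dist y x ^ β) := lintegral_union_le _ _ _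
    _ ≤ 0 + vB * ENNReal.ofReal ((1/2:ℝ)^β * R^(β+(N:ℝ))) * (1 - ENNReal.ofReal q)⁻¹ := by
        exact add_le_add hsing hmain
    _ = ENNReal.ofReal ((1/2:ℝ) ^ β) * vB * (1 - ENNReal.ofReal q)⁻¹
        * ENNReal.ofReal (R ^ (β + (N:ℝ))) := by
        rw [zero_add, ENNReal.ofReal_mul (by positivity)]
        ring

/-- `∫_{|y-x| ≥ R} |y-x|^β dy ≲ R^{β+N}` for `β < -N`. -/
lemma lintegral_rpow_dist_compl (hN : 0 < N) {β : ℝ} (hβN : β < -(N:ℝ)) :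
    ∃ C : ℝ≥0∞, C ≠ ∞ ∧ ∀ (x : Euc N) (R : ℝ), 0 < R →
      ∫⁻ y in {y | R ≤ dist y x}, ENNReal.ofReal (dist y x ^ β)
        ≤ C * ENNReal.ofReal (R ^ (β + (N:ℝ))) := by
  classical
  set vB : ℝ≥0∞ := volume (closedBall (0 : Euc N) 1) with hvB
  have hvBt : vB ≠ ∞ := measure_closedBall_lt_top.ne
  set q : ℝ := (2 : ℝ) ^ (β + (N:ℝ)) with hqdef
  have hq0 : 0 ≤ q := Real.rpow_nonneg (by norm_num) _
  have hq1 : q < 1 := Real.rpow_lt_one_of_one_lt_of_neg (by norm_num) (by linarith)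
  refine ⟨ENNReal.ofReal ((2:ℝ) ^ (N:ℝ)) * vB * (1 - ENNReal.ofReal q)⁻¹, ?_, ?_⟩
  · exact ENNReal.mul_ne_top (ENNReal.mul_ne_top ENNReal.ofReal_ne_top hvBt)
      (geom_inv_ne_top hq1)
  intro x R hR
  have hdistm : Measurable fun y : Euc N => dist y x :=
    (continuous_id.dist continuous_const).measurable
  set T : ℕ → Set (Euc N) :=
    fun k => {y | (2:ℝ)^k * R ≤ dist y x ∧ dist y x < (2:ℝ)^(k+1) * R} with hT
  have hTmeas : ∀ k, MeasurableSet (T k) := by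
    intro k
    exact (measurableSet_le measurable_const hdistm).inter
      (measurableSet_lt hdistm measurable_const)
  have hcov : {y : Euc N | R ≤ dist y x} ⊆ ⋃ k, T k := by
    intro y hy
    obtain ⟨k, hk1, hk2⟩ := exists_dyadic_up hR hy
    exact mem_iUnion.2 ⟨k, hk1, hk2⟩
  have hshell : ∀ k : ℕ, ∫⁻ y in T k, ENNReal.ofReal (dist y x ^ β)
      ≤ vB * ENNReal.ofReal (((2:ℝ)^(N:ℝ) * R^(β+(N:ℝ))) * q ^ k) := by
    intro k
    have hbk : (0:ℝ) < (2:ℝ)^k * R := by positivity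
    have hpt : ∀ y ∈ T k, ENNReal.ofReal (dist y x ^ β)
        ≤ ENNReal.ofReal (((2:ℝ)^k * R) ^ β) := by
      intro y hy
      exact ENNReal.ofReal_le_ofReal
        (Real.rpow_le_rpow_of_nonpos hbk hy.1 (by linarith))
    have hvol : volume (T k) ≤ ENNReal.ofReal (((2:ℝ)^(k+1) * R) ^ N) * vB := by
      have hsub : T k ⊆ closedBall x ((2:ℝ)^(k+1) * R) := fun y hy =>
        mem_closedBall.2 hy.2.le
      calc volume (T k) ≤ volume (closedBall x ((2:ℝ)^(k+1) * R)) := measure_mono hsub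
      _ = ENNReal.ofReal (((2:ℝ)^(k+1) * R) ^ Module.finrank ℝ (Euc N)) * vB :=
          Measure.addHaar_closedBall' volume x (by positivity)
      _ = ENNReal.ofReal (((2:ℝ)^(k+1) * R) ^ N) * vB := by rw [finrank_euclideanSpace_fin]
    calc ∫⁻ y in T k, ENNReal.ofReal (dist y x ^ β)
        ≤ ENNReal.ofReal (((2:ℝ)^k * R) ^ β)
            * (ENNReal.ofReal (((2:ℝ)^(k+1) * R) ^ N) * vB) :=
          setLIntegral_le_const_mul (hTmeas k) hpt hvol
      _ = ENNReal.ofReal ((((2:ℝ)^k * R) ^ β) * (((2:ℝ)^(k+1) * R) ^ N)) * vB := by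
          rw [ENNReal.ofReal_mul (by positivity), mul_assoc]
      _ = vB * ENNReal.ofReal (((2:ℝ)^(N:ℝ) * R^(β+(N:ℝ))) * q ^ k) := by
          rw [shell_geomB (by norm_num : (0:ℝ) < 2) hR β N k, mul_comm]
  have hmain := lintegral_le_of_shells (μ := volume)
    (S := {y : Euc N | R ≤ dist y x}) (T := T)
    (f := fun y => ENNReal.ofReal (dist y x ^ β))
    (C0 := vB) (c := (2:ℝ)^(N:ℝ) * R^(β+(N:ℝ))) (q := q)
    hcov (by positivity) hq0 hq1 hshell
  calc ∫⁻ y in {y : Euc N | R ≤ dist y x}, ENNReal.ofReal (dist y x ^ β)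
      ≤ vB * ENNReal.ofReal ((2:ℝ)^(N:ℝ) * R^(β+(N:ℝ))) * (1 - ENNReal.ofReal q)⁻¹ := hmain
    _ = ENNReal.ofReal ((2:ℝ) ^ (N:ℝ)) * vB * (1 - ENNReal.ofReal q)⁻¹
        * ENNReal.ofReal (R ^ (β + (N:ℝ))) := by
        rw [ENNReal.ofReal_mul (by positivity)]
        ring




/-- Coordinates are bounded by the Euclidean norm. -/
lemma coord_le_norm (v : Euc N) (i : Fin N) : |v i| ≤ ‖v‖ := by
  have h := EuclideanSpace.norm_eq v
  rw [h]
  have h1 : |v i| = Real.sqrt (‖v i‖ ^ 2) := by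
    rw [Real.sqrt_sq_eq_abs]; simp [Real.norm_eq_abs]
  rw [h1]
  apply Real.sqrt_le_sqrt
  exact Finset.single_le_sum (f := fun j => ‖v j‖ ^ 2)
    (fun j _ => by positivity) (Finset.mem_univ i)

/-- The fundamental boundary-layer ("slab") measure estimate coming from the
`W^{2,∞}` boundary chart. -/
lemma slab_estimate (hN : 0 < N) (Ω : Set (Euc N)) (x₀ : Euc N) (r : ℝ)
    (ψ ψinv : Euc N → Euc N) (hchart : IsW2Chart hN Ω x₀ r ψ ψinv) :
    ∃ CS : ℝ≥0∞, CS ≠ ∞ ∧ ∀ x ∈ ball x₀ r, ∀ s t : ℝ, 0 < t →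
      volume (ball x₀ r ∩ closedBall x s ∩ sdist Ω ⁻¹' Ioo 0 t)
        ≤ CS * ENNReal.ofReal ((max s 0)^(N-1) * t) := by
  classical
  obtain ⟨hr, hψ, ⟨Lp, hLp⟩, hψinv, ⟨Li, hLi⟩, hiv, hcoord⟩ := hchart
  have hx₀Bo : x₀ ∈ ball x₀ r := mem_ball_self hr
  -- differentiability of ψ on the ball
  have hψdiff : ∀ y ∈ ball x₀ r, DifferentiableAt ℝ ψ y := fun y hy =>
    (hψ.contDiffAt (isOpen_ball.mem_nhds hy)).differentiableAt one_ne_zero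
  -- bound on the derivative of ψ
  set MA : ℝ := ‖fderiv ℝ ψ x₀‖ + Lp * r with hMAdef
  have hMA0 : 0 ≤ MA := add_nonneg (norm_nonneg _) (mul_nonneg Lp.coe_nonneg hr.le)
  have hAbound : ∀ y ∈ ball x₀ r, ‖fderiv ℝ ψ y‖ ≤ MA := by
    intro y hy
    have h1 : dist (fderiv ℝ ψ y) (fderiv ℝ ψ x₀) ≤ Lp * dist y x₀ :=
      hLp.dist_le_mul y hy x₀ hx₀Bo
    have h2 : dist y x₀ ≤ r := (mem_ball.1 hy).le
    have h3 := norm_sub_norm_le (fderiv ℝ ψ y) (fderiv ℝ ψ x₀)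
    rw [← dist_eq_norm] at h3
    have h4 : (Lp : ℝ) * dist y x₀ ≤ Lp * r := by
      exact mul_le_mul_of_nonneg_left h2 Lp.coe_nonneg
    rw [hMAdef]; linarith
  -- ψ is Lipschitz on the ball
  have hψlip : ∀ y ∈ ball x₀ r, ∀ y' ∈ ball x₀ r, ‖ψ y - ψ y'‖ ≤ MA * ‖y - y'‖ :=
    fun y hy y' hy' =>
      Convex.norm_image_sub_le_of_norm_fderiv_le hψdiff hAbound (convex_ball x₀ r) hy' hy
  -- injectivity of ψ on the ball
  have hinj : InjOn ψ (ball x₀ r) := fun a ha b hb h => by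
    rw [← hiv a ha, h, hiv b hb]
  -- within-derivative of ψinv composed with derivative of ψ is the identity
  have hBA : ∀ y ∈ ball x₀ r,
      (fderivWithin ℝ ψinv (ψ '' ball x₀ r) (ψ y)).comp (fderiv ℝ ψ y)
        = ContinuousLinearMap.id ℝ (Euc N) := by
    intro y hy
    have hwy : ψ y ∈ ψ '' ball x₀ r := mem_image_of_mem ψ hy
    have hdw : DifferentiableWithinAt ℝ ψinv (ψ '' ball x₀ r) (ψ y) :=
      (hψinv.differentiableOn one_ne_zero) (ψ y) hwy
    have h1 : HasFDerivWithinAt (ψinv ∘ ψ)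
        ((fderivWithin ℝ ψinv (ψ '' ball x₀ r) (ψ y)).comp (fderiv ℝ ψ y))
        (ball x₀ r) y :=
      HasFDerivWithinAt.comp y hdw.hasFDerivWithinAt
        (hψdiff y hy).hasFDerivAt.hasFDerivWithinAt (mapsTo_image ψ _)
    have h2 : HasFDerivWithinAt (ψinv ∘ ψ) (ContinuousLinearMap.id ℝ (Euc N))
        (ball x₀ r) y := by
      have hid : HasFDerivWithinAt (fun z : Euc N => z)
          (ContinuousLinearMap.id ℝ (Euc N)) (ball x₀ r) y := hasFDerivWithinAt_id y _
      exact hid.congr (fun z hz => hiv z hz) (hiv y hy)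
    exact (isOpen_ball.uniqueDiffWithinAt hy).eq h1 h2
  -- derivative of ψ is invertible and ψ maps the ball to an open set
  have hT'open : IsOpen (ψ '' ball x₀ r) := by
    rw [isOpen_iff_mem_nhds]
    rintro w ⟨y, hy, rfl⟩
    have hinjA : Function.Injective (fderiv ℝ ψ y) := by
      intro v v' hvv
      have := congrArg (fun (L : Euc N →L[ℝ] Euc N) => L v) (hBA y hy)
      have h2 := congrArg (fun (L : Euc N →L[ℝ] Euc N) => L v') (hBA y hy)
      simp only [ContinuousLinearMap.coe_comp', Function.comp_apply,
        ContinuousLinearMap.coe_id', id_eq] at this h2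
      rw [← this, ← h2, hvv]
    have hbij : Function.Bijective (fderiv ℝ ψ y : Euc N →ₗ[ℝ] Euc N) :=
      ⟨hinjA, (LinearMap.injective_iff_surjective).mp hinjA⟩
    let eA : Euc N ≃L[ℝ] Euc N :=
      (LinearEquiv.ofBijective (fderiv ℝ ψ y : Euc N →ₗ[ℝ] Euc N) hbij).toContinuousLinearEquiv
    have hstrict : HasStrictFDerivAt ψ (eA : Euc N →L[ℝ] Euc N) y := by
      have h := (hψ.contDiffAt (isOpen_ball.mem_nhds hy)).hasStrictFDerivAt one_ne_zero
      have : (eA : Euc N →L[ℝ] Euc N) = fderiv ℝ ψ y := by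
        ext v; rfl
      rwa [this]
    have hmap := hstrict.map_nhds_eq_of_equiv
    rw [← hmap]
    exact image_mem_map (isOpen_ball.mem_nhds hy)
  -- genuine differentiability of ψinv on the image, with uniform bounds
  have hinvdiff : ∀ w ∈ ψ '' ball x₀ r, DifferentiableAt ℝ ψinv w := fun w hw =>
    (hψinv.contDiffAt (hT'open.mem_nhds hw)).differentiableAt one_ne_zero
  set MB : ℝ := ‖fderiv ℝ ψinv (ψ x₀)‖ + Li * (MA * (2 * r)) with hMBdef
  have hMB0 : 0 ≤ MB := add_nonneg (norm_nonneg _)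
    (mul_nonneg Li.coe_nonneg (by positivity))
  have hBibound : ∀ w ∈ ψ '' ball x₀ r, ‖fderiv ℝ ψinv w‖ ≤ MB := by
    rintro _ ⟨y, hy, rfl⟩
    have h1 : dist (fderiv ℝ ψinv (ψ y)) (fderiv ℝ ψinv (ψ x₀)) ≤ Li * dist (ψ y) (ψ x₀) :=
      hLi.dist_le_mul (ψ y) (mem_image_of_mem ψ hy) (ψ x₀) (mem_image_of_mem ψ hx₀Bo)
    have h2 : dist (ψ y) (ψ x₀) ≤ MA * (2 * r) := by
      rw [dist_eq_norm]
      calc ‖ψ y - ψ x₀‖ ≤ MA * ‖y - x₀‖ := hψlip y hy x₀ hx₀Bo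
      _ ≤ MA * (2 * r) := by
          apply mul_le_mul_of_nonneg_left _ hMA0
          rw [← dist_eq_norm]
          nlinarith [(mem_ball.1 hy).le]
    have h3 := norm_sub_norm_le (fderiv ℝ ψinv (ψ y)) (fderiv ℝ ψinv (ψ x₀))
    rw [← dist_eq_norm] at h3
    have h4 : (Li : ℝ) * dist (ψ y) (ψ x₀) ≤ Li * (MA * (2 * r)) :=
      mul_le_mul_of_nonneg_left h2 Li.coe_nonneg
    rw [hMBdef]; linarith
  -- the constant
  refine ⟨ENNReal.ofReal (MB ^ N) * ENNReal.ofReal ((2 * MA)^(N-1)), by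
    exact ENNReal.mul_ne_top ENNReal.ofReal_ne_top ENNReal.ofReal_ne_top, ?_⟩
  intro x hx s t ht
  set a : ℝ := MA * max s 0 with hadef
  have ha0 : 0 ≤ a := mul_nonneg hMA0 (le_max_right _ _)
  set lastIdx : Fin N := ⟨N - 1, Nat.sub_lt hN Nat.one_pos⟩ with hlast
  set E : Set (Euc N) := ball x₀ r ∩ closedBall x s ∩ sdist Ω ⁻¹' Ioo 0 t with hE
  have hsdcont : Continuous (sdist Ω) :=
    (continuous_infDist_pt _).sub (continuous_infDist_pt _)
  have hEmeas : MeasurableSet E :=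
    ((measurableSet_ball.inter measurableSet_closedBall).inter
      (hsdcont.measurable measurableSet_Ioo))
  have hEBo : E ⊆ ball x₀ r := fun y hy => hy.1.1
  -- T := ψ '' E is measurable
  set T : Set (Euc N) := ψ '' E with hT
  have hTsub : T ⊆ ψ '' ball x₀ r := image_mono hEBo
  have hTmeas : MeasurableSet T :=
    hEmeas.image_of_continuousOn_injOn (hψ.continuousOn.mono hEBo) (hinj.mono hEBo)
  -- E is the image of T under ψinv
  have hET : ψinv '' T = E := by
    apply Subset.antisymm
    · rintro _ ⟨w, ⟨y, hy, rfl⟩, rfl⟩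
      rw [hiv y (hEBo hy)]
      exact hy
    · intro y hy
      exact ⟨ψ y, mem_image_of_mem ψ hy, hiv y (hEBo hy)⟩
  -- the change of variables estimate
  have hstep1 : volume E ≤ ENNReal.ofReal (MB ^ N) * volume T := by
    rw [← hET]
    calc volume (ψinv '' T)
        ≤ ∫⁻ w in T, ENNReal.ofReal |(fderiv ℝ ψinv w).det| :=
          addHaar_image_le_lintegral_abs_det_fderiv volume hTmeas
            (fun w hw => ((hinvdiff w (hTsub hw)).hasFDerivAt).hasFDerivWithinAt)
      _ ≤ ENNReal.ofReal (MB ^ N) * volume T := by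
          apply setLIntegral_le_const_mul hTmeas _ le_rfl
          intro w hw
          apply ENNReal.ofReal_le_ofReal
          calc |(fderiv ℝ ψinv w).det| ≤ ‖fderiv ℝ ψinv w‖ ^ N := abs_det_le_pow_opNorm _
          _ ≤ MB ^ N := pow_le_pow_left₀ (norm_nonneg _) (hBibound w (hTsub hw)) N
  -- the box containing T
  set I : Fin N → Set ℝ := fun i =>
    if i = lastIdx then Ioo 0 t else Icc (ψ x i - a) (ψ x i + a) with hI
  have hImeas : ∀ i, MeasurableSet (I i) := by
    intro i
    by_cases h : i = lastIdx <;> simp [hI, h]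
  have hTbox : T ⊆ ((MeasurableEquiv.toLp 2 (Fin N → ℝ)).symm) ⁻¹' (univ.pi I) := by
    rintro _ ⟨y, hy, rfl⟩
    intro i _
    have happ : ((MeasurableEquiv.toLp 2 (Fin N → ℝ)).symm) (ψ y) i = ψ y i := rfl
    rw [happ, hI]
    dsimp only
    split
    · rename_i hi
      rw [hi, hcoord y (hEBo hy)]
      exact hy.2
    · have hbd : |ψ y i - ψ x i| ≤ a := by
        have h1 : |(ψ y - ψ x) i| ≤ ‖ψ y - ψ x‖ := coord_le_norm _ i
        have h2 : ‖ψ y - ψ x‖ ≤ MA * ‖y - x‖ := hψlip y (hEBo hy) x hx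
        have h3 : ‖y - x‖ ≤ max s 0 := by
          rw [← dist_eq_norm]
          exact le_trans (mem_closedBall.1 hy.1.2) (le_max_left _ _)
        have h4 : (ψ y - ψ x) i = ψ y i - ψ x i := rfl
        rw [h4] at h1
        calc |ψ y i - ψ x i| ≤ MA * ‖y - x‖ := le_trans h1 h2
        _ ≤ MA * max s 0 := mul_le_mul_of_nonneg_left h3 hMA0
      rw [abs_le] at hbd
      exact ⟨by linarith [hbd.1], by linarith [hbd.2]⟩
  have hstep2 : volume T ≤ ENNReal.ofReal ((2*a)^(N-1)) * ENNReal.ofReal t := by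
    calc volume T ≤ volume (((MeasurableEquiv.toLp 2 (Fin N → ℝ)).symm) ⁻¹' (univ.pi I)) :=
          measure_mono hTbox
    _ = volume (univ.pi I) :=
        (EuclideanSpace.volume_preserving_symm_measurableEquiv_toLp (Fin N)).measure_preimage
          ((MeasurableSet.univ_pi hImeas).nullMeasurableSet)
    _ = ∏ i, volume (I i) := volume_pi_pi I
    _ = ENNReal.ofReal ((2*a)^(N-1)) * ENNReal.ofReal t := by
        rw [← Finset.prod_erase_mul Finset.univ _ (Finset.mem_univ lastIdx)]
        have h1 : volume (I lastIdx) = ENNReal.ofReal t := by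
          rw [hI]; simp [Real.volume_Ioo]
        have h2 : ∀ i ∈ Finset.univ.erase lastIdx, volume (I i) = ENNReal.ofReal (2*a) := by
          intro i hi
          have hne := Finset.ne_of_mem_erase hi
          rw [hI]
          simp only [if_neg hne, Real.volume_Icc]
          congr 1
          ring
        rw [Finset.prod_congr rfl h2, Finset.prod_const, h1,
          Finset.card_erase_of_mem (Finset.mem_univ _), Finset.card_univ, Fintype.card_fin,
          ENNReal.ofReal_pow (by positivity)]
  -- conclusion
  calc volume E ≤ ENNReal.ofReal (MB ^ N) * volume T := hstep1
  _ ≤ ENNReal.ofReal (MB ^ N) * (ENNReal.ofReal ((2*a)^(N-1)) * ENNReal.ofReal t) := by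
      exact mul_le_mul_right hstep2 _
  _ = ENNReal.ofReal (MB ^ N) * ENNReal.ofReal ((2*a)^(N-1) * t) := by
      rw [ENNReal.ofReal_mul (by positivity)]
  _ = ENNReal.ofReal (MB ^ N) * ENNReal.ofReal ((2 * MA)^(N-1))
      * ENNReal.ofReal ((max s 0)^(N-1) * t) := by
      have hreal : ((2*a):ℝ)^(N-1) * t = (2*MA)^(N-1) * ((max s 0)^(N-1) * t) := by
        rw [hadef, show (2 * (MA * max s 0) : ℝ) = (2*MA) * (max s 0) by ring, mul_pow]
        ring
      rw [hreal, ENNReal.ofReal_mul (by positivity)]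
      ring




/-! ### basic facts about the signed distance -/

lemma sdist_eq_infDist {Ω : Set (Euc N)} {y : Euc N} (hy : y ∈ closure Ω) :
    sdist Ω y = infDist y Ωᶜ := by
  have h : infDist y Ω = 0 := by
    rw [← infDist_closure]
    exact infDist_zero_of_mem hy
  rw [sdist, h, sub_zero]

lemma sdist_nonneg_of_mem_closure {Ω : Set (Euc N)} {y : Euc N} (hy : y ∈ closure Ω) :
    0 ≤ sdist Ω y := by
  rw [sdist_eq_infDist hy]; exact infDist_nonneg

lemma sdist_le_add_dist {Ω : Set (Euc N)} {x y : Euc N} (hx : x ∈ closure Ω)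
    (hy : y ∈ closure Ω) : sdist Ω x ≤ sdist Ω y + dist x y := by
  rw [sdist_eq_infDist hx, sdist_eq_infDist hy]
  exact infDist_le_infDist_add_dist

lemma sdist_pos_of_mem {Ω : Set (Euc N)} {x : Euc N} (hop : IsOpen Ω)
    (hne : Ωᶜ.Nonempty) (hx : x ∈ Ω) : 0 < sdist Ω x := by
  rw [sdist_eq_infDist (subset_closure hx)]
  exact (hop.isClosed_compl.notMem_iff_infDist_pos hne).mp (fun h => h hx)

lemma sdist_le_dist_of_frontier {Ω : Set (Euc N)} {x x₀ : Euc N} (hx : x ∈ closure Ω)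
    (hx₀ : x₀ ∈ frontier Ω) : sdist Ω x ≤ dist x x₀ := by
  rw [sdist_eq_infDist hx, ← infDist_closure]
  apply infDist_le_dist_of_mem
  rw [frontier_eq_closure_inter_closure] at hx₀
  exact hx₀.2

lemma continuous_sdist {Ω : Set (Euc N)} : Continuous (sdist Ω) :=
  (continuous_infDist_pt _).sub (continuous_infDist_pt _)

/-! ### the layer-cake estimate for `d^{-1/4}` near the boundary -/

lemma layer_estimate (hN : 0 < N) (Ω : Set (Euc N)) (x₀ : Euc N) (r : ℝ)
    (ψ ψinv : Euc N → Euc N) (hchart : IsW2Chart hN Ω x₀ r ψ ψinv) :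
    ∃ CE : ℝ≥0∞, CE ≠ ∞ ∧ ∀ x ∈ ball x₀ r, ∀ s t : ℝ, 0 < t →
      ∫⁻ y in ball x₀ r ∩ closedBall x s ∩ sdist Ω ⁻¹' Ioo 0 t,
        ENNReal.ofReal (sdist Ω y ^ (-(4⁻¹:ℝ)))
        ≤ CE * ENNReal.ofReal ((max s 0)^(N-1) * t ^ ((3:ℝ)/4)) := by
  classical
  obtain ⟨CS, hCSt, hslab⟩ := slab_estimate hN Ω x₀ r ψ ψinv hchart
  set q : ℝ := (1/2:ℝ) ^ ((3:ℝ)/4) with hq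
  have hq0 : 0 ≤ q := Real.rpow_nonneg (by norm_num) _
  have hq1 : q < 1 := Real.rpow_lt_one (by norm_num) (by norm_num) (by norm_num)
  refine ⟨CS * ENNReal.ofReal (2 * (1/2:ℝ) ^ (-(4⁻¹:ℝ))) * (1 - ENNReal.ofReal q)⁻¹,
    ENNReal.mul_ne_top (ENNReal.mul_ne_top hCSt ENNReal.ofReal_ne_top)
      (geom_inv_ne_top hq1), ?_⟩
  intro x hx s t ht
  set T : ℕ → Set (Euc N) := fun m =>
    ball x₀ r ∩ closedBall x s ∩ sdist Ω ⁻¹' Ioc ((1/2:ℝ)^(m+1) * t) ((1/2:ℝ)^m * t) with hT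
  have hsdcont : Continuous (sdist Ω) := continuous_sdist
  have hTmeas : ∀ m, MeasurableSet (T m) := fun m =>
    (measurableSet_ball.inter measurableSet_closedBall).inter
      (hsdcont.measurable measurableSet_Ioc)
  have hcov : ball x₀ r ∩ closedBall x s ∩ sdist Ω ⁻¹' Ioo 0 t ⊆ ⋃ m, T m := by
    intro y hy
    obtain ⟨m, hm1, hm2⟩ := exists_dyadic_down hy.2.1 hy.2.2.le
    exact mem_iUnion.2 ⟨m, hy.1, hm1, hm2⟩
  have hshell : ∀ m : ℕ, ∫⁻ y in T m, ENNReal.ofReal (sdist Ω y ^ (-(4⁻¹:ℝ)))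
      ≤ CS * ENNReal.ofReal
          ((2 * (1/2:ℝ) ^ (-(4⁻¹:ℝ)) * ((max s 0)^(N-1) * t ^ ((3:ℝ)/4))) * q ^ m) := by
    intro m
    have hbm : (0:ℝ) < (1/2:ℝ)^(m+1) * t := by positivity
    have hpt : ∀ y ∈ T m, ENNReal.ofReal (sdist Ω y ^ (-(4⁻¹:ℝ)))
        ≤ ENNReal.ofReal (((1/2:ℝ)^(m+1) * t) ^ (-(4⁻¹:ℝ))) := fun y hy =>
      ENNReal.ofReal_le_ofReal
        (Real.rpow_le_rpow_of_nonpos hbm hy.2.1.le (by norm_num))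
    have hvol : volume (T m)
        ≤ CS * ENNReal.ofReal ((max s 0)^(N-1) * (2 * ((1/2:ℝ)^m * t))) := by
      have hsub : T m ⊆ ball x₀ r ∩ closedBall x s ∩ sdist Ω ⁻¹' Ioo 0 (2 * ((1/2:ℝ)^m * t)) := by
        intro y hy
        refine ⟨hy.1, lt_of_lt_of_le hbm hy.2.1.le, ?_⟩
        calc sdist Ω y ≤ (1/2:ℝ)^m * t := hy.2.2
        _ < 2 * ((1/2:ℝ)^m * t) := by nlinarith [pow_pos (by norm_num : (0:ℝ) < 1/2) m]
      calc volume (T m) ≤ volume (ball x₀ r ∩ closedBall x s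
            ∩ sdist Ω ⁻¹' Ioo 0 (2 * ((1/2:ℝ)^m * t))) := measure_mono hsub
      _ ≤ CS * ENNReal.ofReal ((max s 0)^(N-1) * (2 * ((1/2:ℝ)^m * t))) :=
          hslab x hx s _ (by positivity)
    calc ∫⁻ y in T m, ENNReal.ofReal (sdist Ω y ^ (-(4⁻¹:ℝ)))
        ≤ ENNReal.ofReal (((1/2:ℝ)^(m+1) * t) ^ (-(4⁻¹:ℝ)))
          * (CS * ENNReal.ofReal ((max s 0)^(N-1) * (2 * ((1/2:ℝ)^m * t)))) :=
          setLIntegral_le_const_mul (hTmeas m) hpt hvol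
      _ = CS * (ENNReal.ofReal (((1/2:ℝ)^(m+1) * t) ^ (-(4⁻¹:ℝ)))
            * ENNReal.ofReal ((max s 0)^(N-1) * (2 * ((1/2:ℝ)^m * t)))) := by
          ring
      _ = CS * ENNReal.ofReal ((((1/2:ℝ)^(m+1) * t) ^ (-(4⁻¹:ℝ)))
            * ((max s 0)^(N-1) * (2 * ((1/2:ℝ)^m * t)))) := by
          rw [← ENNReal.ofReal_mul (by positivity)]
      _ = CS * ENNReal.ofReal
          ((2 * (1/2:ℝ) ^ (-(4⁻¹:ℝ)) * ((max s 0)^(N-1) * t ^ ((3:ℝ)/4))) * q ^ m) := by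
          congr 1
          apply congrArg
          have hgeom := shell_geomC (b := (1/2:ℝ)) (t := t) (by norm_num) ht (-(4⁻¹:ℝ)) m
          have he : (-(4⁻¹:ℝ)) + 1 = (3:ℝ)/4 := by norm_num
          rw [he] at hgeom
          calc (((1/2:ℝ)^(m+1) * t) ^ (-(4⁻¹:ℝ))) * ((max s 0)^(N-1) * (2 * ((1/2:ℝ)^m * t)))
              = 2 * (max s 0)^(N-1) * ((((1/2:ℝ)^(m+1)*t) ^ (-(4⁻¹:ℝ))) * ((1/2:ℝ)^m*t)) := by
                ring
            _ = 2 * (max s 0)^(N-1) * ((1/2:ℝ) ^ (-(4⁻¹:ℝ)) * t ^ ((3:ℝ)/4) * q ^ m) := by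
                rw [hgeom, hq]
            _ = (2 * (1/2:ℝ) ^ (-(4⁻¹:ℝ)) * ((max s 0)^(N-1) * t ^ ((3:ℝ)/4))) * q ^ m := by
                ring
  have := lintegral_le_of_shells (μ := volume)
    (S := ball x₀ r ∩ closedBall x s ∩ sdist Ω ⁻¹' Ioo 0 t) (T := T)
    (f := fun y => ENNReal.ofReal (sdist Ω y ^ (-(4⁻¹:ℝ)))) (C0 := CS)
    (c := 2 * (1/2:ℝ) ^ (-(4⁻¹:ℝ)) * ((max s 0)^(N-1) * t ^ ((3:ℝ)/4))) (q := q)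
    hcov (by positivity) hq0 hq1 hshell
  calc ∫⁻ y in ball x₀ r ∩ closedBall x s ∩ sdist Ω ⁻¹' Ioo 0 t,
        ENNReal.ofReal (sdist Ω y ^ (-(4⁻¹:ℝ)))
      ≤ CS * ENNReal.ofReal (2 * (1/2:ℝ) ^ (-(4⁻¹:ℝ)) * ((max s 0)^(N-1) * t ^ ((3:ℝ)/4)))
        * (1 - ENNReal.ofReal q)⁻¹ := this
    _ = CS * ENNReal.ofReal (2 * (1/2:ℝ) ^ (-(4⁻¹:ℝ))) * (1 - ENNReal.ofReal q)⁻¹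
        * ENNReal.ofReal ((max s 0)^(N-1) * t ^ ((3:ℝ)/4)) := by
        rw [ENNReal.ofReal_mul (by positivity)]
        ring

/-! ### change of variables for the jump map -/

lemma lintegral_comp_jump_le (Ω : Set (Euc N)) (j : Euc N → Euc N → Euc N) (Aj : ℝ)
    (hJ0 : AssumptionJ0 Ω j Aj) (x : Euc N) (hx : x ∈ closure Ω)
    {S : Set (Euc N)} (hS : MeasurableSet S) (G : Euc N → ℝ≥0∞) :
    ∫⁻ z in S, G (x + j x z)
      ≤ ENNReal.ofReal (Aj ^ N) * ∫⁻ y in (fun z => x + j x z) '' S, G y := by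
  obtain ⟨hj, hbij, hk, hkb⟩ := hJ0 x hx
  set k := Function.invFun (j x) with hkdef
  have hkj : ∀ z, k (j x z) = z := fun z =>
    Function.leftInverse_invFun hbij.injective z
  have hAj0 : 0 ≤ Aj := le_trans (norm_nonneg _) (hkb 0)
  -- derivative chain rule and determinant identity
  have hdet : ∀ z : Euc N, 1 ≤ Aj ^ N * |(fderiv ℝ (j x) z).det| := by
    intro z
    have hdj : DifferentiableAt ℝ (j x) z := (hj.differentiable one_ne_zero) z
    have hdk : DifferentiableAt ℝ k (j x z) := (hk.differentiable one_ne_zero) (j x z)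
    have hcomp : fderiv ℝ (k ∘ j x) z
        = (fderiv ℝ k (j x z)).comp (fderiv ℝ (j x) z) := fderiv_comp z hdk hdj
    have hid : (k ∘ j x) = id := funext hkj
    rw [hid, fderiv_id] at hcomp
    have hdets : ((ContinuousLinearMap.id ℝ (Euc N)).det : ℝ)
        = (fderiv ℝ k (j x z)).det * (fderiv ℝ (j x) z).det := by
      rw [hcomp]
      exact LinearMap.det_comp _ _
    have hone : (1:ℝ) = (fderiv ℝ k (j x z)).det * (fderiv ℝ (j x) z).det := by
      rw [← hdets]
      simp [ContinuousLinearMap.det]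
    have habs : (1:ℝ) = |(fderiv ℝ k (j x z)).det| * |(fderiv ℝ (j x) z).det| := by
      rw [← abs_mul, ← hone, abs_one]
    have hb1 : |(fderiv ℝ k (j x z)).det| ≤ Aj ^ N := by
      calc |(fderiv ℝ k (j x z)).det| ≤ ‖fderiv ℝ k (j x z)‖ ^ N := abs_det_le_pow_opNorm _
      _ ≤ Aj ^ N := pow_le_pow_left₀ (norm_nonneg _) (hkb _) N
    calc (1:ℝ) = |(fderiv ℝ k (j x z)).det| * |(fderiv ℝ (j x) z).det| := habs
    _ ≤ Aj ^ N * |(fderiv ℝ (j x) z).det| :=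
        mul_le_mul_of_nonneg_right hb1 (abs_nonneg _)
  -- change of variables
  have hder : ∀ z ∈ S, HasFDerivWithinAt (fun z => x + j x z) (fderiv ℝ (j x) z) S z :=
    fun z _ => (((hj.differentiable one_ne_zero) z).hasFDerivAt.const_add x).hasFDerivWithinAt
  have hinj : InjOn (fun z => x + j x z) S := fun a _ b _ h =>
    hbij.injective (add_left_cancel h)
  have himg := lintegral_image_eq_lintegral_abs_det_fderiv_mul volume hS hder hinj G
  calc ∫⁻ z in S, G (x + j x z)
      ≤ ∫⁻ z in S, ENNReal.ofReal (Aj ^ N)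
          * (ENNReal.ofReal |(fderiv ℝ (j x) z).det| * G (x + j x z)) := by
        refine lintegral_mono fun z => ?_
        show G (x + j x z) ≤ _
        have h1 : (1:ℝ≥0∞) ≤ ENNReal.ofReal (Aj ^ N)
            * ENNReal.ofReal |(fderiv ℝ (j x) z).det| := by
          rw [← ENNReal.ofReal_mul (by positivity)]
          calc (1:ℝ≥0∞) = ENNReal.ofReal 1 := by simp
          _ ≤ ENNReal.ofReal (Aj ^ N * |(fderiv ℝ (j x) z).det|) :=
              ENNReal.ofReal_le_ofReal (hdet z)
        calc G (x + j x z)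
            ≤ (ENNReal.ofReal (Aj ^ N) * ENNReal.ofReal |(fderiv ℝ (j x) z).det|)
              * G (x + j x z) := le_mul_of_one_le_left zero_le h1
        _ = ENNReal.ofReal (Aj ^ N)
            * (ENNReal.ofReal |(fderiv ℝ (j x) z).det| * G (x + j x z)) := by ring
    _ = ENNReal.ofReal (Aj ^ N)
        * ∫⁻ z in S, ENNReal.ofReal |(fderiv ℝ (j x) z).det| * G (x + j x z) :=
        lintegral_const_mul' _ _ ENNReal.ofReal_ne_top
    _ = ENNReal.ofReal (Aj ^ N) * ∫⁻ y in (fun z => x + j x z) '' S, G y := by rw [himg]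




/-- Main estimate for the integral of the dominating kernel over the chart ball. -/
lemma main_G_estimate (hN : 0 < N) (Ω : Set (Euc N)) (hop : IsOpen Ω)
    (x₀ : Euc N) (hx₀f : x₀ ∈ frontier Ω) (r : ℝ) (hr : 0 < r)
    {σ : ℝ} (hσ0 : 0 < σ) (hσ1 : σ < 1)
    (CE : ℝ≥0∞) (hCEt : CE ≠ ∞)
    (hlayer : ∀ x ∈ ball x₀ r, ∀ s t : ℝ, 0 < t →
      ∫⁻ y in ball x₀ r ∩ closedBall x s ∩ sdist Ω ⁻¹' Ioo 0 t,
        ENNReal.ofReal (sdist Ω y ^ (-(4⁻¹:ℝ)))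
        ≤ CE * ENNReal.ofReal ((max s 0)^(N-1) * t ^ ((3:ℝ)/4))) :
    ∃ CG : ℝ≥0∞, CG ≠ ∞ ∧ ∀ x ∈ ball x₀ (r/2) ∩ Ω,
      ∫⁻ y in ball x₀ r ∩ closure Ω,
        ENNReal.ofReal (max (Real.log (sdist Ω x) - Real.log (sdist Ω y)) 0
          * dist y x ^ (-((N:ℝ)+σ)))
        ≤ CG * ENNReal.ofReal (sdist Ω x ^ (-σ)) := by
  classical
  have hNσ : (1:ℝ) < (N:ℝ) + σ := by
    have : (1:ℝ) ≤ (N:ℝ) := by exact_mod_cast hN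
    linarith
  -- the two radial integral constants
  obtain ⟨C1, hC1t, hC1⟩ := lintegral_rpow_dist_closedBall hN
    (β := 1 - ((N:ℝ)+σ)) (by linarith) (by linarith)
  obtain ⟨C2, hC2t, hC2⟩ := lintegral_rpow_dist_compl hN
    (β := -((N:ℝ)+σ)) (by linarith)
  set L₁ : ℝ := 1 + max (Real.log r) 0 with hL₁
  have hL₁0 : 0 ≤ L₁ := by positivity
  set q4 : ℝ := (2:ℝ) ^ (-(1+σ)) with hq4
  have hq40 : 0 ≤ q4 := Real.rpow_nonneg (by norm_num) _
  have hq41 : q4 < 1 := Real.rpow_lt_one_of_one_lt_of_neg (by norm_num) (by linarith)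
  set c4' : ℝ := 4 * 2^((N:ℝ)-1) * (2:ℝ)^(σ+4⁻¹) with hc4'
  refine ⟨C1 * ENNReal.ofReal 2 + ENNReal.ofReal L₁ * C2
    + CE * ENNReal.ofReal c4' * (1 - ENNReal.ofReal q4)⁻¹, ?_, ?_⟩
  · refine ENNReal.add_ne_top.2 ⟨ENNReal.add_ne_top.2 ⟨?_, ?_⟩, ?_⟩
    · exact ENNReal.mul_ne_top hC1t ENNReal.ofReal_ne_top
    · exact ENNReal.mul_ne_top ENNReal.ofReal_ne_top hC2t
    · exact ENNReal.mul_ne_top (ENNReal.mul_ne_top hCEt ENNReal.ofReal_ne_top)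
        (geom_inv_ne_top hq41)
  intro x hx
  have hxΩ : x ∈ Ω := hx.2
  have hxcl : x ∈ closure Ω := subset_closure hxΩ
  have hne : Ωᶜ.Nonempty := by
    rw [frontier_eq_closure_inter_closure] at hx₀f
    rcases closure_nonempty_iff.mp ⟨x₀, hx₀f.2⟩ with ⟨w, hw⟩
    exact ⟨w, hw⟩
  set D : ℝ := sdist Ω x with hDdef
  have hD : 0 < D := sdist_pos_of_mem hop hne hxΩ
  have hDr2 : D < r / 2 := lt_of_le_of_lt (sdist_le_dist_of_frontier hxcl hx₀f)
    (mem_ball.1 hx.1)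
  have hDr : D ≤ r := by linarith
  have hxr : x ∈ ball x₀ r := by
    have := mem_ball.1 hx.1
    exact mem_ball.2 (by linarith)
  -- notation for the integrand
  set f : Euc N → ℝ≥0∞ := fun y =>
    ENNReal.ofReal (max (Real.log D - Real.log (sdist Ω y)) 0
      * dist y x ^ (-((N:ℝ)+σ))) with hf
  have hY' : MeasurableSet (ball x₀ r ∩ closure Ω) :=
    measurableSet_ball.inter measurableSet_closure
  have hsdm : Measurable (sdist Ω) := continuous_sdist.measurable
  have hdm : Measurable fun y : Euc N => dist y x :=
    (continuous_id.dist continuous_const).measurable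
  -- the three regions
  set P1 : Set (Euc N) := (ball x₀ r ∩ closure Ω) ∩ {y | D/2 ≤ sdist Ω y}
    ∩ closedBall x D with hP1
  set P23 : Set (Euc N) := (ball x₀ r ∩ closure Ω)
    ∩ ({y | D/2 ≤ sdist Ω y} ∪ {y | sdist Ω y ≤ 0}) ∩ {y | D ≤ dist y x} with hP23
  set P4 : Set (Euc N) := (ball x₀ r ∩ closure Ω)
    ∩ {y | 0 < sdist Ω y ∧ sdist Ω y < D/2} with hP4
  have hP1m : MeasurableSet P1 :=
    (hY'.inter (hsdm measurableSet_Ici)).inter measurableSet_closedBall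
  have hP23m : MeasurableSet P23 :=
    (hY'.inter ((hsdm measurableSet_Ici).union (hsdm measurableSet_Iic))).inter
      (measurableSet_le measurable_const hdm)
  have hP4m : MeasurableSet P4 :=
    hY'.inter ((hsdm measurableSet_Ioi).inter (hsdm measurableSet_Iio))
  have hcover : ball x₀ r ∩ closure Ω ⊆ P1 ∪ P23 ∪ P4 := by
    intro y hy
    rcases le_or_gt (D/2) (sdist Ω y) with hu | hu
    · rcases le_or_gt (dist y x) D with hd | hd
      · exact Or.inl (Or.inl ⟨⟨hy, hu⟩, mem_closedBall.2 hd⟩)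
      · exact Or.inl (Or.inr ⟨⟨hy, Or.inl hu⟩, hd.le⟩)
    · rcases le_or_gt (sdist Ω y) 0 with hu0 | hu0
      · refine Or.inl (Or.inr ⟨⟨hy, Or.inr hu0⟩, ?_⟩)
        have h1 := sdist_le_add_dist hxcl hy.2
        rw [dist_comm x y, ← hDdef] at h1
        show D ≤ dist y x
        linarith
      · exact Or.inr ⟨hy, hu0, hu⟩
  -- region 1 estimate
  have hI1 : ∫⁻ y in P1, f y ≤ C1 * ENNReal.ofReal 2 * ENNReal.ofReal (D ^ (-σ)) := by
    have hpt : ∀ y ∈ P1, f y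
        ≤ ENNReal.ofReal (2/D) * ENNReal.ofReal (dist y x ^ (1 - ((N:ℝ)+σ))) := by
      intro y hy
      rw [hf, ← ENNReal.ofReal_mul (by positivity)]
      apply ENNReal.ofReal_le_ofReal
      have hu2 : D/2 ≤ sdist Ω y := hy.1.2
      have hu0 : 0 < sdist Ω y := lt_of_lt_of_le (by positivity) hu2
      have hmax : max (Real.log D - Real.log (sdist Ω y)) 0 ≤ 2 * dist y x / D := by
        rcases le_or_gt (Real.log D - Real.log (sdist Ω y)) 0 with h | h
        · rw [max_eq_right h]
          positivity
        · rw [max_eq_left h.le]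
          have huD : sdist Ω y < D := by
            by_contra hcon
            push_neg at hcon
            have := Real.log_le_log hD hcon
            linarith
          have h1 : Real.log D - Real.log (sdist Ω y) = Real.log (D / sdist Ω y) := by
            rw [Real.log_div hD.ne' hu0.ne']
          have h2 : Real.log (D / sdist Ω y) ≤ D / sdist Ω y - 1 :=
            Real.log_le_sub_one_of_pos (by positivity)
          have h3 : D / sdist Ω y - 1 = (D - sdist Ω y) / sdist Ω y := by
            field_simp
          have h4 : (D - sdist Ω y) / sdist Ω y ≤ (D - sdist Ω y) / (D/2) :=
            div_le_div_of_nonneg_left (by linarith) (by positivity) hu2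
          have h5 : D - sdist Ω y ≤ dist y x := by
            have := sdist_le_add_dist hxcl hy.1.1.2
            rw [dist_comm x y] at this
            linarith
          have h6 : (D - sdist Ω y) / (D/2) ≤ dist y x / (D/2) := by gcongr
          rw [h1] at *
          calc Real.log (D / sdist Ω y) ≤ (D - sdist Ω y) / sdist Ω y := by linarith
          _ ≤ dist y x / (D/2) := le_trans h4 h6
          _ = 2 * dist y x / D := by field_simp
      rcases eq_or_lt_of_le (dist_nonneg (x := y) (y := x)) with hd0 | hd0
      · rw [← hd0]
        rw [Real.zero_rpow (by intro hcon; linarith),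
          Real.zero_rpow (by intro hcon; linarith)]
        simp
      · have he : dist y x ^ (1 - ((N:ℝ)+σ))
            = dist y x * dist y x ^ (-((N:ℝ)+σ)) := by
          rw [show (1 - ((N:ℝ)+σ)) = 1 + (-((N:ℝ)+σ)) by ring,
            Real.rpow_add hd0, Real.rpow_one]
        rw [he]
        calc max (Real.log D - Real.log (sdist Ω y)) 0 * dist y x ^ (-((N:ℝ)+σ))
            ≤ (2 * dist y x / D) * dist y x ^ (-((N:ℝ)+σ)) :=
              mul_le_mul_of_nonneg_right hmax (Real.rpow_nonneg dist_nonneg _)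
        _ = 2/D * (dist y x * dist y x ^ (-((N:ℝ)+σ))) := by ring
    calc ∫⁻ y in P1, f y
        ≤ ∫⁻ y in P1, ENNReal.ofReal (2/D)
            * ENNReal.ofReal (dist y x ^ (1 - ((N:ℝ)+σ))) := setLIntegral_mono' hP1m hpt
      _ = ENNReal.ofReal (2/D)
          * ∫⁻ y in P1, ENNReal.ofReal (dist y x ^ (1 - ((N:ℝ)+σ))) :=
          lintegral_const_mul' _ _ ENNReal.ofReal_ne_top
      _ ≤ ENNReal.ofReal (2/D)
          * ∫⁻ y in closedBall x D, ENNReal.ofReal (dist y x ^ (1 - ((N:ℝ)+σ))) := by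
          apply mul_le_mul_right
          exact lintegral_mono_set (fun y hy => hy.2)
      _ ≤ ENNReal.ofReal (2/D) * (C1 * ENNReal.ofReal (D ^ ((1 - ((N:ℝ)+σ)) + (N:ℝ)))) :=
          mul_le_mul_right (hC1 x D hD) _
      _ = C1 * ENNReal.ofReal 2 * ENNReal.ofReal (D ^ (-σ)) := by
          rw [← mul_assoc, mul_comm (ENNReal.ofReal (2/D)) C1, mul_assoc, mul_assoc,
            ← ENNReal.ofReal_mul (by positivity), ← ENNReal.ofReal_mul (by norm_num)]
          congr 2
          rw [show (1 - ((N:ℝ)+σ)) + (N:ℝ) = 1 - σ by ring]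
          rw [show (2:ℝ)/D = 2 * D⁻¹ by ring, mul_assoc, ← Real.rpow_neg_one D,
            ← Real.rpow_add hD]
          congr 2
          ring
  -- region 2/3 estimate
  have hI23 : ∫⁻ y in P23, f y ≤ ENNReal.ofReal L₁ * C2 * ENNReal.ofReal (D ^ (-σ)) := by
    have hpt : ∀ y ∈ P23, f y
        ≤ ENNReal.ofReal L₁ * ENNReal.ofReal (dist y x ^ (-((N:ℝ)+σ))) := by
      intro y hy
      rw [hf, ← ENNReal.ofReal_mul hL₁0]
      apply ENNReal.ofReal_le_ofReal
      apply mul_le_mul_of_nonneg_right _ (Real.rpow_nonneg dist_nonneg _)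
      rcases hy.1.2 with hu | hu
      · -- sdist y ≥ D/2
        have hu0 : 0 < sdist Ω y := lt_of_lt_of_le (by positivity) hu
        apply max_le _ hL₁0
        have h1 : Real.log (D/2) ≤ Real.log (sdist Ω y) := by
          apply Real.log_le_log (by positivity) hu
        have h2 : Real.log (D/2) = Real.log D - Real.log 2 := by
          rw [Real.log_div hD.ne' (by norm_num)]
        have h3 : Real.log 2 ≤ 1 := by
          have := Real.log_le_sub_one_of_pos (by norm_num : (0:ℝ) < 2)
          linarith
        rw [hL₁]
        have h4 : 0 ≤ max (Real.log r) 0 := le_max_right _ _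
        linarith
      · -- sdist y = 0 (nonneg on the closure)
        have hu0 : sdist Ω y = 0 :=
          le_antisymm hu (sdist_nonneg_of_mem_closure hy.1.1.2)
        rw [hu0, Real.log_zero, sub_zero]
        apply max_le _ hL₁0
        have h1 : Real.log D ≤ Real.log r := Real.log_le_log hD hDr
        rw [hL₁]
        have h2 : Real.log r ≤ max (Real.log r) 0 := le_max_left _ _
        linarith
    calc ∫⁻ y in P23, f y
        ≤ ∫⁻ y in P23, ENNReal.ofReal L₁
            * ENNReal.ofReal (dist y x ^ (-((N:ℝ)+σ))) := setLIntegral_mono' hP23m hpt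
      _ = ENNReal.ofReal L₁
          * ∫⁻ y in P23, ENNReal.ofReal (dist y x ^ (-((N:ℝ)+σ))) :=
          lintegral_const_mul' _ _ ENNReal.ofReal_ne_top
      _ ≤ ENNReal.ofReal L₁
          * ∫⁻ y in {y | D ≤ dist y x}, ENNReal.ofReal (dist y x ^ (-((N:ℝ)+σ))) := by
          apply mul_le_mul_right
          exact lintegral_mono_set (fun y hy => hy.2)
      _ ≤ ENNReal.ofReal L₁ * (C2 * ENNReal.ofReal (D ^ ((-((N:ℝ)+σ)) + (N:ℝ)))) :=
          mul_le_mul_right (hC2 x D hD) _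
      _ = ENNReal.ofReal L₁ * C2 * ENNReal.ofReal (D ^ (-σ)) := by
          rw [show (-((N:ℝ)+σ)) + (N:ℝ) = -σ by ring, mul_assoc]
  -- region 4 estimate
  have hI4 : ∫⁻ y in P4, f y ≤ CE * ENNReal.ofReal (c4' * D ^ (-σ))
      * (1 - ENNReal.ofReal q4)⁻¹ := by
    -- pointwise bound by the separated kernel
    have hpt : ∀ y ∈ P4, f y ≤ ENNReal.ofReal (4 * D ^ (4⁻¹:ℝ))
        * ENNReal.ofReal (sdist Ω y ^ (-(4⁻¹:ℝ)) * dist y x ^ (-((N:ℝ)+σ))) := by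
      intro y hy
      rw [hf, ← ENNReal.ofReal_mul (by positivity)]
      apply ENNReal.ofReal_le_ofReal
      have hu0 : 0 < sdist Ω y := hy.2.1
      have huD : sdist Ω y < D := lt_trans hy.2.2 (by linarith)
      have hmax : max (Real.log D - Real.log (sdist Ω y)) 0
          ≤ 4 * D ^ (4⁻¹:ℝ) * sdist Ω y ^ (-(4⁻¹:ℝ)) := by
        have hq : (0:ℝ) < D / sdist Ω y := by positivity
        have h1 : Real.log D - Real.log (sdist Ω y) = Real.log (D / sdist Ω y) := by
          rw [Real.log_div hD.ne' hu0.ne']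
        have h2 : Real.log ((D / sdist Ω y) ^ (4⁻¹:ℝ))
            = 4⁻¹ * Real.log (D / sdist Ω y) := Real.log_rpow hq _
        have h3 : Real.log ((D / sdist Ω y) ^ (4⁻¹:ℝ)) ≤ (D / sdist Ω y) ^ (4⁻¹:ℝ) - 1 :=
          Real.log_le_sub_one_of_pos (Real.rpow_pos_of_pos hq _)
        have h4 : Real.log (D / sdist Ω y) ≤ 4 * (D / sdist Ω y) ^ (4⁻¹:ℝ) := by
          nlinarith [Real.rpow_pos_of_pos hq (4⁻¹:ℝ)]
        have h5 : (D / sdist Ω y) ^ (4⁻¹:ℝ) = D ^ (4⁻¹:ℝ) * sdist Ω y ^ (-(4⁻¹:ℝ)) := by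
          rw [Real.div_rpow hD.le hu0.le, Real.rpow_neg hu0.le, div_eq_mul_inv]
        apply max_le
        · rw [h1]
          calc Real.log (D / sdist Ω y) ≤ 4 * (D / sdist Ω y) ^ (4⁻¹:ℝ) := h4
          _ = 4 * D ^ (4⁻¹:ℝ) * sdist Ω y ^ (-(4⁻¹:ℝ)) := by rw [h5]; ring
        · positivity
      calc max (Real.log D - Real.log (sdist Ω y)) 0 * dist y x ^ (-((N:ℝ)+σ))
          ≤ (4 * D ^ (4⁻¹:ℝ) * sdist Ω y ^ (-(4⁻¹:ℝ))) * dist y x ^ (-((N:ℝ)+σ)) :=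
            mul_le_mul_of_nonneg_right hmax (Real.rpow_nonneg dist_nonneg _)
      _ = 4 * D ^ (4⁻¹:ℝ) * (sdist Ω y ^ (-(4⁻¹:ℝ)) * dist y x ^ (-((N:ℝ)+σ))) := by ring
    -- shells in the distance variable
    set R : ℝ := D / 2 with hR
    have hR0 : 0 < R := by positivity
    set T : ℕ → Set (Euc N) := fun k =>
      P4 ∩ {y | (2:ℝ)^k * R ≤ dist y x ∧ dist y x < (2:ℝ)^(k+1) * R} with hT
    have hTm : ∀ k, MeasurableSet (T k) := fun k =>
      hP4m.inter ((measurableSet_le measurable_const hdm).inter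
        (measurableSet_lt hdm measurable_const))
    have hcov4 : P4 ⊆ ⋃ k, T k := by
      intro y hy
      have h1 : R ≤ dist y x := by
        have := sdist_le_add_dist hxcl hy.1.2
        rw [dist_comm x y] at this
        have := hy.2.2
        rw [hR]; linarith
      obtain ⟨k, hk1, hk2⟩ := exists_dyadic_up hR0 h1
      exact mem_iUnion.2 ⟨k, hy, hk1, hk2⟩
    have hshell : ∀ k : ℕ, ∫⁻ y in T k,
        ENNReal.ofReal (sdist Ω y ^ (-(4⁻¹:ℝ)) * dist y x ^ (-((N:ℝ)+σ)))
        ≤ CE * ENNReal.ofReal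
            ((2^((N:ℝ)-1) * R ^ (-σ-4⁻¹)) * q4 ^ k) := by
      intro k
      have hs0 : (0:ℝ) ≤ (2:ℝ)^(k+1) * R := by positivity
      have hptk : ∀ y ∈ T k,
          ENNReal.ofReal (sdist Ω y ^ (-(4⁻¹:ℝ)) * dist y x ^ (-((N:ℝ)+σ)))
          ≤ ENNReal.ofReal (((2:ℝ)^k * R) ^ (-((N:ℝ)+σ)))
            * ENNReal.ofReal (sdist Ω y ^ (-(4⁻¹:ℝ))) := by
        intro y hy
        rw [← ENNReal.ofReal_mul (by positivity)]
        apply ENNReal.ofReal_le_ofReal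
        rw [mul_comm (((2:ℝ)^k * R) ^ (-((N:ℝ)+σ)))]
        apply mul_le_mul_of_nonneg_left _ (Real.rpow_nonneg
          (sdist_nonneg_of_mem_closure hy.1.1.2) _)
        exact Real.rpow_le_rpow_of_nonpos (by positivity) hy.2.1 (by linarith)
      have hsub : T k ⊆ ball x₀ r ∩ closedBall x ((2:ℝ)^(k+1) * R)
          ∩ sdist Ω ⁻¹' Ioo 0 R := by
        intro y hy
        exact ⟨⟨hy.1.1.1, mem_closedBall.2 hy.2.2.le⟩, hy.1.2.1, hy.1.2.2⟩
      calc ∫⁻ y in T k, ENNReal.ofReal (sdist Ω y ^ (-(4⁻¹:ℝ)) * dist y x ^ (-((N:ℝ)+σ)))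
          ≤ ∫⁻ y in T k, ENNReal.ofReal (((2:ℝ)^k * R) ^ (-((N:ℝ)+σ)))
              * ENNReal.ofReal (sdist Ω y ^ (-(4⁻¹:ℝ))) := setLIntegral_mono' (hTm k) hptk
        _ = ENNReal.ofReal (((2:ℝ)^k * R) ^ (-((N:ℝ)+σ)))
            * ∫⁻ y in T k, ENNReal.ofReal (sdist Ω y ^ (-(4⁻¹:ℝ))) :=
            lintegral_const_mul' _ _ ENNReal.ofReal_ne_top
        _ ≤ ENNReal.ofReal (((2:ℝ)^k * R) ^ (-((N:ℝ)+σ)))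
            * ∫⁻ y in ball x₀ r ∩ closedBall x ((2:ℝ)^(k+1) * R)
                ∩ sdist Ω ⁻¹' Ioo 0 R, ENNReal.ofReal (sdist Ω y ^ (-(4⁻¹:ℝ))) :=
            mul_le_mul_right (lintegral_mono_set hsub) _
        _ ≤ ENNReal.ofReal (((2:ℝ)^k * R) ^ (-((N:ℝ)+σ)))
            * (CE * ENNReal.ofReal ((max ((2:ℝ)^(k+1) * R) 0)^(N-1) * R ^ ((3:ℝ)/4))) :=
            mul_le_mul_right (hlayer x hxr _ R hR0) _
        _ = CE * ENNReal.ofReal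
            ((((2:ℝ)^k * R) ^ (-((N:ℝ)+σ))) * (((2:ℝ)^(k+1) * R)^(N-1) * R ^ ((3:ℝ)/4))) := by
            rw [max_eq_left hs0,
              show ENNReal.ofReal (((2:ℝ)^k * R) ^ (-((N:ℝ)+σ)))
                * (CE * ENNReal.ofReal (((2:ℝ)^(k+1) * R)^(N-1) * R ^ ((3:ℝ)/4)))
                = CE * (ENNReal.ofReal (((2:ℝ)^k * R) ^ (-((N:ℝ)+σ)))
                  * ENNReal.ofReal (((2:ℝ)^(k+1) * R)^(N-1) * R ^ ((3:ℝ)/4))) from by ring,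
              ← ENNReal.ofReal_mul (by positivity)]
        _ = CE * ENNReal.ofReal
            ((2^((N:ℝ)-1) * R ^ (-σ-4⁻¹)) * q4 ^ k) := by
            congr 1
            apply congrArg
            have hcast : ((N-1:ℕ):ℝ) = (N:ℝ) - 1 := by
              have : (1:ℕ) ≤ N := hN
              push_cast [Nat.cast_sub this]
              ring
            have hgeom := shell_geomB (b := (2:ℝ)) (R := R) (by norm_num) hR0
              (-((N:ℝ)+σ)) (N-1) k
            rw [hcast] at hgeom
            have he1 : -((N:ℝ)+σ) + ((N:ℝ)-1) = -(1+σ) := by ring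
            rw [he1] at hgeom
            calc (((2:ℝ)^k * R) ^ (-((N:ℝ)+σ))) * (((2:ℝ)^(k+1) * R)^(N-1) * R ^ ((3:ℝ)/4))
                = ((((2:ℝ)^k * R) ^ (-((N:ℝ)+σ))) * (((2:ℝ)^(k+1) * R)^(N-1)))
                  * R ^ ((3:ℝ)/4) := by ring
              _ = (2^((N:ℝ)-1) * R ^ (-(1+σ)) * ((2:ℝ) ^ (-(1+σ)))^k) * R ^ ((3:ℝ)/4) := by
                  rw [hgeom]
              _ = (2^((N:ℝ)-1) * R ^ (-σ-4⁻¹)) * q4 ^ k := by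
                  have hq5 : R ^ (-(1+σ)) * R ^ ((3:ℝ)/4) = R ^ (-σ-4⁻¹) := by
                    rw [← Real.rpow_add hR0]
                    congr 1
                    ring
                  rw [hq4, ← hq5]
                  ring
    have hmain4 := lintegral_le_of_shells (μ := volume) (S := P4) (T := T)
      (f := fun y => ENNReal.ofReal (sdist Ω y ^ (-(4⁻¹:ℝ)) * dist y x ^ (-((N:ℝ)+σ))))
      (C0 := CE) (c := 2^((N:ℝ)-1) * R ^ (-σ-4⁻¹)) (q := q4)
      hcov4 (by positivity) hq40 hq41 hshell
    calc ∫⁻ y in P4, f y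
        ≤ ∫⁻ y in P4, ENNReal.ofReal (4 * D ^ (4⁻¹:ℝ))
            * ENNReal.ofReal (sdist Ω y ^ (-(4⁻¹:ℝ)) * dist y x ^ (-((N:ℝ)+σ))) :=
          setLIntegral_mono' hP4m hpt
      _ = ENNReal.ofReal (4 * D ^ (4⁻¹:ℝ))
          * ∫⁻ y in P4, ENNReal.ofReal (sdist Ω y ^ (-(4⁻¹:ℝ)) * dist y x ^ (-((N:ℝ)+σ))) :=
          lintegral_const_mul' _ _ ENNReal.ofReal_ne_top
      _ ≤ ENNReal.ofReal (4 * D ^ (4⁻¹:ℝ))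
          * (CE * ENNReal.ofReal (2^((N:ℝ)-1) * R ^ (-σ-4⁻¹))
            * (1 - ENNReal.ofReal q4)⁻¹) := mul_le_mul_right hmain4 _
      _ = CE * ENNReal.ofReal (c4' * D ^ (-σ)) * (1 - ENNReal.ofReal q4)⁻¹ := by
          have hreal : (4 * D ^ (4⁻¹:ℝ)) * (2^((N:ℝ)-1) * R ^ (-σ-4⁻¹))
              = c4' * D ^ (-σ) := by
            have h1 : (R : ℝ) ^ (-σ-4⁻¹) = D ^ (-σ-4⁻¹) * (2:ℝ)^(σ+4⁻¹) := by
              rw [hR, show (D/2 : ℝ) = D * 2⁻¹ by ring,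
                Real.mul_rpow hD.le (by norm_num),
                show ((2:ℝ)⁻¹) = (2:ℝ) ^ (-1:ℝ) by
                  rw [Real.rpow_neg_one],
                ← Real.rpow_mul (by norm_num : (0:ℝ) ≤ 2)]
              congr 2
              ring
            have h2 : D ^ (4⁻¹:ℝ) * D ^ (-σ-4⁻¹) = D ^ (-σ) := by
              rw [← Real.rpow_add hD]
              congr 1
              ring
            calc (4 * D ^ (4⁻¹:ℝ)) * (2^((N:ℝ)-1) * R ^ (-σ-4⁻¹))
                = (4 * 2^((N:ℝ)-1) * (2:ℝ)^(σ+4⁻¹)) * (D ^ (4⁻¹:ℝ) * D ^ (-σ-4⁻¹)) := by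
                  rw [h1]; ring
              _ = c4' * D ^ (-σ) := by rw [h2, hc4']
          calc ENNReal.ofReal (4 * D ^ (4⁻¹:ℝ))
              * (CE * ENNReal.ofReal (2^((N:ℝ)-1) * R ^ (-σ-4⁻¹))
                * (1 - ENNReal.ofReal q4)⁻¹)
              = CE * (ENNReal.ofReal (4 * D ^ (4⁻¹:ℝ))
                * ENNReal.ofReal (2^((N:ℝ)-1) * R ^ (-σ-4⁻¹)))
                * (1 - ENNReal.ofReal q4)⁻¹ := by ring
            _ = CE * ENNReal.ofReal ((4 * D ^ (4⁻¹:ℝ)) * (2^((N:ℝ)-1) * R ^ (-σ-4⁻¹)))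
                * (1 - ENNReal.ofReal q4)⁻¹ := by
                rw [← ENNReal.ofReal_mul (by positivity)]
            _ = CE * ENNReal.ofReal (c4' * D ^ (-σ)) * (1 - ENNReal.ofReal q4)⁻¹ := by
                rw [hreal]
  -- combine
  calc ∫⁻ y in ball x₀ r ∩ closure Ω, f y
      ≤ ∫⁻ y in P1 ∪ P23 ∪ P4, f y := lintegral_mono_set hcover
    _ ≤ (∫⁻ y in P1 ∪ P23, f y) + ∫⁻ y in P4, f y := lintegral_union_le _ _ _
    _ ≤ ((∫⁻ y in P1, f y) + ∫⁻ y in P23, f y) + ∫⁻ y in P4, f y :=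
        add_le_add (lintegral_union_le _ _ _) le_rfl
    _ ≤ (C1 * ENNReal.ofReal 2 * ENNReal.ofReal (D ^ (-σ))
          + ENNReal.ofReal L₁ * C2 * ENNReal.ofReal (D ^ (-σ)))
        + CE * ENNReal.ofReal (c4' * D ^ (-σ)) * (1 - ENNReal.ofReal q4)⁻¹ :=
        add_le_add (add_le_add hI1 hI23) hI4
    _ = (C1 * ENNReal.ofReal 2 + ENNReal.ofReal L₁ * C2
          + CE * ENNReal.ofReal c4' * (1 - ENNReal.ofReal q4)⁻¹)
        * ENNReal.ofReal (D ^ (-σ)) := by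
        rw [ENNReal.ofReal_mul (by positivity)]
        ring



/-- **Nonlocal estimate on the logarithmic blow-up function (first part of Lemma `blow`).**
Under (O), (M), (J0), (J1), for `x̄ ∈ Γ_in` with boundary chart of radius `r` at `x̄`, the
function `U_r(x) = -log d(x) + (3/2) log r` satisfies
`I_ξ[U_r](x) ≤ A d(x)^{-σ}` on `B_{r/2}(x̄) ∩ Ω`, for all `0 < ξ ≤ C_j⁻¹ r / 2`,
for some constant `A > 0`. -/
theorem log_blowup_nonlocal_estimate
    (hN : 0 < N) (Ω : Set (Euc N)) (hΩ : IsW2Domain hN Ω)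
    (n : Euc N → Euc N) (hn : IsExteriorNormal Ω n)
    (g : Euc N → Euc N → ℝ) (Cμ Dμ σ : ℝ) (hM : AssumptionM Ω g Cμ Dμ σ)
    (j : Euc N → Euc N → Euc N) (Aj : ℝ) (hJ0 : AssumptionJ0 Ω j Aj)
    (Cj' Cj Dj : ℝ) (hJ1 : AssumptionJ1 Ω j Cj' Cj Dj)
    {A : Type} [MetricSpace A] [CompactSpace A] [Nonempty A]
    (b : Euc N → A → Euc N)
    (hbc : Continuous (fun q : Euc N × A => b q.1 q.2)) (hbb : ∃ M, ∀ x α, ‖b x α‖ ≤ M)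
    (x₀ : Euc N) (hx₀ : x₀ ∈ GammaIn Ω n b)
    (r : ℝ) (ψ ψinv : Euc N → Euc N) (hchart : IsW2Chart hN Ω x₀ r ψ ψinv) :
    ∃ Acst > (0:ℝ), ∀ ξ : ℝ, 0 < ξ → ξ ≤ Cj⁻¹ * r / 2 →
      ∀ x ∈ ball x₀ (r / 2) ∩ Ω,
        Iin Ω j g ξ (fun y => -Real.log (sdist Ω y) + (3 / 2) * Real.log r) x ≤
          Acst * sdist Ω x ^ (-σ) := by
  classical
  obtain ⟨hop, -⟩ := hΩ
  obtain ⟨⟨hCμ, hσIoo, hgmeas, hg0, hgle⟩, -, -⟩ := hM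
  have hσ0 : 0 < σ := hσIoo.1
  have hσ1 : σ < 1 := hσIoo.2
  obtain ⟨hCj'0, hCj0, hDj0, hJbound, -⟩ := hJ1
  have hrpos : 0 < r := hchart.1
  have hx₀f : x₀ ∈ frontier Ω := hx₀.1
  obtain ⟨CE, hCEt, hlayer⟩ := layer_estimate hN Ω x₀ r ψ ψinv hchart
  obtain ⟨CG, hCGt, hG⟩ := main_G_estimate hN Ω hop x₀ hx₀f r hrpos hσ0 hσ1 CE hCEt hlayer
  set K₀ : ℝ := Cμ * Cj ^ ((N:ℝ)+σ) with hK₀def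
  have hK₀0 : 0 ≤ K₀ := mul_nonneg hCμ.le (Real.rpow_nonneg hCj0.le _)
  set Ctot : ℝ≥0∞ := ENNReal.ofReal K₀ * ENNReal.ofReal ((Aj:ℝ)^N) * CG with hCtotdef
  have hCtot_ne : Ctot ≠ ∞ :=
    ENNReal.mul_ne_top (ENNReal.mul_ne_top ENNReal.ofReal_ne_top ENNReal.ofReal_ne_top) hCGt
  refine ⟨Ctot.toReal + 1, by positivity, ?_⟩
  intro ξ hξ0 hξle x hx
  have hxΩ : x ∈ Ω := hx.2
  have hxcl : x ∈ closure Ω := subset_closure hxΩ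
  have hne : Ωᶜ.Nonempty := by
    have h := hx₀f
    rw [frontier_eq_closure_inter_closure] at h
    rcases closure_nonempty_iff.mp ⟨x₀, h.2⟩ with ⟨w, hw⟩
    exact ⟨w, hw⟩
  have hD : 0 < sdist Ω x := sdist_pos_of_mem hop hne hxΩ
  -- the integration domain
  set S : Set (Euc N) := {z : Euc N | ‖z‖ < ξ ∧ x + j x z ∈ closure Ω} with hSdef
  have hjcont : Continuous (j x) := (hJ0 x hxcl).1.continuous
  have hSm : MeasurableSet S := by
    have hS2 : S = {z : Euc N | ‖z‖ < ξ} ∩ ((fun z => x + j x z) ⁻¹' closure Ω) := rfl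
    rw [hS2]
    exact (measurableSet_lt continuous_norm.measurable measurable_const).inter
      ((continuous_const.add hjcont).measurable measurableSet_closure)
  -- the dominating kernel
  set Gi : Euc N → ℝ≥0∞ := fun y =>
    ENNReal.ofReal (max (Real.log (sdist Ω x) - Real.log (sdist Ω y)) 0
      * dist y x ^ (-((N:ℝ)+σ))) with hGidef
  -- pointwise domination on S
  have hptS : ∀ z ∈ S,
      ENNReal.ofReal (((fun y => -Real.log (sdist Ω y) + (3:ℝ) / 2 * Real.log r) (x + j x z)
        - (fun y => -Real.log (sdist Ω y) + (3:ℝ) / 2 * Real.log r) x) * g x z)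
      ≤ ENNReal.ofReal K₀ * Gi (x + j x z) := by
    intro z hz
    have hycl : x + j x z ∈ closure Ω := hz.2
    have hg0' : 0 ≤ g x z := hg0 x hxcl z
    have hgle' : g x z ≤ Cμ * ‖z‖ ^ (-((N:ℝ) + σ)) := hgle x hxcl z
    have hφ : ((fun y => -Real.log (sdist Ω y) + (3:ℝ) / 2 * Real.log r) (x + j x z)
        - (fun y => -Real.log (sdist Ω y) + (3:ℝ) / 2 * Real.log r) x)
        = Real.log (sdist Ω x) - Real.log (sdist Ω (x + j x z)) := by
      simp only
      ring
    rw [hφ, hGidef, ← ENNReal.ofReal_mul hK₀0]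
    rcases eq_or_ne z 0 with hz0 | hz0
    · -- the jump vanishes at `z = 0`
      have hj0 : j x 0 = 0 := by
        have h := (hJbound x hxcl 0).2
        rw [norm_zero, mul_zero] at h
        exact norm_le_zero_iff.mp h
      rw [hz0, hj0, add_zero, sub_self, zero_mul]
      apply ENNReal.ofReal_le_ofReal
      positivity
    · have hzpos : 0 < ‖z‖ := norm_pos_iff.mpr hz0
      have hjle : ‖j x z‖ ≤ Cj * ‖z‖ := (hJbound x hxcl z).2
      have hjge : Cj' * ‖z‖ ≤ ‖j x z‖ := (hJbound x hxcl z).1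
      have hjpos : 0 < ‖j x z‖ := lt_of_lt_of_le (by positivity) hjge
      have hdyx : dist (x + j x z) x = ‖j x z‖ := by
        rw [dist_eq_norm, add_sub_cancel_left]
      apply ENNReal.ofReal_le_ofReal
      have hstep1 : (Real.log (sdist Ω x) - Real.log (sdist Ω (x + j x z))) * g x z
          ≤ max (Real.log (sdist Ω x) - Real.log (sdist Ω (x + j x z))) 0 * g x z :=
        mul_le_mul_of_nonneg_right (le_max_left _ _) hg0'
      have hmax0 : 0 ≤ max (Real.log (sdist Ω x) - Real.log (sdist Ω (x + j x z))) 0 :=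
        le_max_right _ _
      have hstep2 : max (Real.log (sdist Ω x) - Real.log (sdist Ω (x + j x z))) 0 * g x z
          ≤ max (Real.log (sdist Ω x) - Real.log (sdist Ω (x + j x z))) 0
            * (Cμ * ‖z‖ ^ (-((N:ℝ) + σ))) :=
        mul_le_mul_of_nonneg_left hgle' hmax0
      have hznorm : ‖z‖ ^ (-((N:ℝ) + σ))
          ≤ Cj ^ ((N:ℝ)+σ) * ‖j x z‖ ^ (-((N:ℝ) + σ)) := by
        have h1 : (Cj * ‖z‖) ^ (-((N:ℝ)+σ)) ≤ ‖j x z‖ ^ (-((N:ℝ)+σ)) :=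
          Real.rpow_le_rpow_of_nonpos hjpos hjle
            (neg_nonpos.mpr (by positivity))
        have h2 : (Cj * ‖z‖) ^ (-((N:ℝ)+σ))
            = Cj ^ (-((N:ℝ)+σ)) * ‖z‖ ^ (-((N:ℝ)+σ)) :=
          Real.mul_rpow hCj0.le hzpos.le
        have h3 : Cj ^ ((N:ℝ)+σ) * Cj ^ (-((N:ℝ)+σ)) = 1 := by
          rw [← Real.rpow_add hCj0, show ((N:ℝ)+σ) + (-((N:ℝ)+σ)) = 0 by ring,
            Real.rpow_zero]
        calc ‖z‖ ^ (-((N:ℝ) + σ))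
            = (Cj ^ ((N:ℝ)+σ) * Cj ^ (-((N:ℝ)+σ))) * ‖z‖ ^ (-((N:ℝ) + σ)) := by
              rw [h3, one_mul]
          _ = Cj ^ ((N:ℝ)+σ) * ((Cj * ‖z‖) ^ (-((N:ℝ)+σ))) := by rw [h2]; ring
          _ ≤ Cj ^ ((N:ℝ)+σ) * ‖j x z‖ ^ (-((N:ℝ) + σ)) :=
              mul_le_mul_of_nonneg_left h1 (Real.rpow_nonneg hCj0.le _)
      calc (Real.log (sdist Ω x) - Real.log (sdist Ω (x + j x z))) * g x z
          ≤ max (Real.log (sdist Ω x) - Real.log (sdist Ω (x + j x z))) 0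
            * (Cμ * ‖z‖ ^ (-((N:ℝ) + σ))) := le_trans hstep1 hstep2
        _ ≤ max (Real.log (sdist Ω x) - Real.log (sdist Ω (x + j x z))) 0
            * (Cμ * (Cj ^ ((N:ℝ)+σ) * ‖j x z‖ ^ (-((N:ℝ) + σ)))) := by
            apply mul_le_mul_of_nonneg_left _ hmax0
            exact mul_le_mul_of_nonneg_left hznorm hCμ.le
        _ = K₀ * (max (Real.log (sdist Ω x) - Real.log (sdist Ω (x + j x z))) 0
            * dist (x + j x z) x ^ (-((N:ℝ)+σ))) := by
            rw [hdyx, hK₀def]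
            ring
  -- the image of the domain is inside the chart ball
  have himgsub : (fun z => x + j x z) '' S ⊆ ball x₀ r ∩ closure Ω := by
    rintro _ ⟨z, hz, rfl⟩
    refine ⟨?_, hz.2⟩
    have h1 : dist (x + j x z) x = ‖j x z‖ := by
      rw [dist_eq_norm, add_sub_cancel_left]
    have h2 : ‖j x z‖ ≤ Cj * ‖z‖ := (hJbound x hxcl z).2
    have h3 : Cj * ‖z‖ < Cj * ξ := by
      exact mul_lt_mul_of_pos_left hz.1 hCj0
    have h4 : Cj * ξ ≤ r / 2 := by
      have := mul_le_mul_of_nonneg_left hξle hCj0.le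
      calc Cj * ξ ≤ Cj * (Cj⁻¹ * r / 2) := this
      _ = r / 2 := by field_simp
    have h5 : dist x x₀ < r / 2 := mem_ball.1 hx.1
    have := dist_triangle (x + j x z) x x₀
    rw [h1] at this
    exact mem_ball.2 (by linarith)
  -- assembling the lintegral estimate
  have htotal : (∫⁻ z in S,
      ENNReal.ofReal (((fun y => -Real.log (sdist Ω y) + (3:ℝ) / 2 * Real.log r) (x + j x z)
        - (fun y => -Real.log (sdist Ω y) + (3:ℝ) / 2 * Real.log r) x) * g x z))
      ≤ Ctot * ENNReal.ofReal (sdist Ω x ^ (-σ)) := by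
    calc (∫⁻ z in S,
        ENNReal.ofReal (((fun y => -Real.log (sdist Ω y) + (3:ℝ) / 2 * Real.log r) (x + j x z)
          - (fun y => -Real.log (sdist Ω y) + (3:ℝ) / 2 * Real.log r) x) * g x z))
        ≤ ∫⁻ z in S, ENNReal.ofReal K₀ * Gi (x + j x z) := setLIntegral_mono' hSm hptS
      _ = ENNReal.ofReal K₀ * ∫⁻ z in S, Gi (x + j x z) :=
          lintegral_const_mul' _ _ ENNReal.ofReal_ne_top
      _ ≤ ENNReal.ofReal K₀ * (ENNReal.ofReal ((Aj:ℝ)^N)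
          * ∫⁻ y in (fun z => x + j x z) '' S, Gi y) :=
          mul_le_mul_right (lintegral_comp_jump_le Ω j Aj hJ0 x hxcl hSm Gi) _
      _ ≤ ENNReal.ofReal K₀ * (ENNReal.ofReal ((Aj:ℝ)^N)
          * ∫⁻ y in ball x₀ r ∩ closure Ω, Gi y) := by
          apply mul_le_mul_right
          apply mul_le_mul_right
          exact lintegral_mono_set himgsub
      _ ≤ ENNReal.ofReal K₀ * (ENNReal.ofReal ((Aj:ℝ)^N)
          * (CG * ENNReal.ofReal (sdist Ω x ^ (-σ)))) := by
          apply mul_le_mul_right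
          apply mul_le_mul_right
          exact hG x ⟨hx.1, hxΩ⟩
      _ = Ctot * ENNReal.ofReal (sdist Ω x ^ (-σ)) := by
          rw [hCtotdef]
          ring
  -- conclusion
  have hIin : Iin Ω j g ξ (fun y => -Real.log (sdist Ω y) + 3 / 2 * Real.log r) x
      = ∫ z in S, (((fun y => -Real.log (sdist Ω y) + (3:ℝ) / 2 * Real.log r) (x + j x z)
        - (fun y => -Real.log (sdist Ω y) + (3:ℝ) / 2 * Real.log r) x) * g x z) := rfl
  rw [hIin]
  have hrpow0 : 0 ≤ sdist Ω x ^ (-σ) := Real.rpow_nonneg hD.le _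
  calc (∫ z in S, (((fun y => -Real.log (sdist Ω y) + (3:ℝ) / 2 * Real.log r) (x + j x z)
        - (fun y => -Real.log (sdist Ω y) + (3:ℝ) / 2 * Real.log r) x) * g x z))
      ≤ (∫⁻ z in S,
        ENNReal.ofReal (((fun y => -Real.log (sdist Ω y) + (3:ℝ) / 2 * Real.log r) (x + j x z)
          - (fun y => -Real.log (sdist Ω y) + (3:ℝ) / 2 * Real.log r) x) * g x z)).toReal :=
        integral_le_toReal_lintegral _ _
    _ ≤ (Ctot * ENNReal.ofReal (sdist Ω x ^ (-σ))).toReal := by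
        apply ENNReal.toReal_mono
        · exact ENNReal.mul_ne_top hCtot_ne ENNReal.ofReal_ne_top
        · exact htotal
    _ = Ctot.toReal * (sdist Ω x ^ (-σ)) := by
        rw [ENNReal.toReal_mul, ENNReal.toReal_ofReal hrpow0]
    _ ≤ (Ctot.toReal + 1) * (sdist Ω x ^ (-σ)) := by
        apply mul_le_mul_of_nonneg_right _ hrpow0
        linarith


end Censored

end
end

section
/- Supersolution inequality for the logarithmic blow-up function near Γ_in. Under the assumptions of the nonlocal estimate on U_r (Ω of class W^{2,∞}, (M), (J0), (J1), x̄ ∈ Γ_in, r = r(x̄), U_r(x) = −log(d(x)) + (3/2) log r, and A > 0 the constant with I_ξ[U_r](x) ≤ A d(x)^{−σ} on B_{r/2}(x̄) ∩ Ω), there exists r̃ = r̃(r, A, σ) with r̃ ≤ r such that for every ξ ≤ C_j⁻¹ r/2, every x ∈ B_{r̃/2}(x̄) ∩ Ω and every α ∈ 𝒜, one has −b(x,α)·DU_r(x) − I_ξ[U_r](x) ≥ 0. -/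
set_option autoImplicit false

/- Common framework for censored nonlocal Hamilton–Jacobi equations with
Neumann boundary conditions (Barles-type viscosity solutions). -/

open Set Metric MeasureTheory Filter Topology Function
open scoped RealInnerProductSpace NNReal ENNReal

noncomputable section

namespace Censored

variable {N : ℕ}

/-- Auxiliary: a coordinate of a Euclidean vector is bounded by its norm. -/
lemma abs_coord_le_norm {n : ℕ} (v : EuclideanSpace ℝ (Fin n)) (i : Fin n) :
    |v i| ≤ ‖v‖ := by
  rw [EuclideanSpace.norm_eq]
  have h1 : |v i| = Real.sqrt (‖v i‖ ^ 2) := by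
    rw [Real.sqrt_sq_eq_abs]; simp [abs_abs]
  rw [h1]
  apply Real.sqrt_le_sqrt
  exact Finset.single_le_sum (fun j _ => sq_nonneg ‖v j‖) (Finset.mem_univ i)

/-- **Supersolution inequality for the logarithmic blow-up function (second part of
Lemma `blow`).**  Under the assumptions of the nonlocal estimate on
`U_r(x) = -log d(x) + (3/2) log r`, if `A > 0` is a constant with
`I_ξ[U_r] ≤ A d^{-σ}` on `B_{r/2}(x̄) ∩ Ω`, then there is `r̃ = r̃(r,A,σ) ≤ r` such that
`-b(x,α)·DU_r(x) - I_ξ[U_r](x) ≥ 0` on `B_{r̃/2}(x̄) ∩ Ω` for every `0 < ξ ≤ C_j⁻¹ r/2`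
and every control `α`. -/
theorem log_blowup_supersolution
    (hN : 0 < N) (Ω : Set (Euc N)) (hΩ : IsW2Domain hN Ω)
    (n : Euc N → Euc N) (hn : IsExteriorNormal Ω n)
    (g : Euc N → Euc N → ℝ) (Cμ Dμ σ : ℝ) (hM : AssumptionM Ω g Cμ Dμ σ)
    (j : Euc N → Euc N → Euc N) (Aj : ℝ) (hJ0 : AssumptionJ0 Ω j Aj)
    (Cj' Cj Dj : ℝ) (hJ1 : AssumptionJ1 Ω j Cj' Cj Dj)
    {A : Type} [MetricSpace A] [CompactSpace A] [Nonempty A]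
    (b : Euc N → A → Euc N)
    (hbc : Continuous (fun q : Euc N × A => b q.1 q.2)) (hbb : ∃ M, ∀ x α, ‖b x α‖ ≤ M)
    (x₀ : Euc N) (hx₀ : x₀ ∈ GammaIn Ω n b)
    (r : ℝ) (ψ ψinv : Euc N → Euc N) (hchart : IsW2Chart hN Ω x₀ r ψ ψinv)
    (Acst : ℝ) (hA : 0 < Acst)
    (hbound : ∀ ξ : ℝ, 0 < ξ → ξ ≤ Cj⁻¹ * r / 2 →
      ∀ x ∈ ball x₀ (r / 2) ∩ Ω,
        Iin Ω j g ξ (fun y => -Real.log (sdist Ω y) + (3 / 2) * Real.log r) x ≤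
          Acst * sdist Ω x ^ (-σ)) :
    ∃ rt : ℝ, 0 < rt ∧ rt ≤ r ∧
      ∀ ξ : ℝ, 0 < ξ → ξ ≤ Cj⁻¹ * r / 2 →
        ∀ x ∈ ball x₀ (rt / 2) ∩ Ω, ∀ α : A,
          0 ≤ -⟪b x α,
              gradient (fun y => -Real.log (sdist Ω y) + (3 / 2) * Real.log r) x⟫
            - Iin Ω j g ξ (fun y => -Real.log (sdist Ω y) + (3 / 2) * Real.log r) x := by
  obtain ⟨hopen, -⟩ := hΩ
  obtain ⟨hr, hψ, ⟨L, hL⟩, -, -, -, hψd⟩ := hchart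
  have hx₀f : x₀ ∈ frontier Ω := hx₀.1
  have hx₀c : x₀ ∈ Ωᶜ := fun h => hx₀f.2 (by rwa [hopen.interior_eq])
  set i₀ : Fin N := ⟨N - 1, Nat.sub_lt hN Nat.one_pos⟩ with hi₀
  set e : Euc N →L[ℝ] ℝ := EuclideanSpace.proj i₀ with he
  -- derivative of the signed distance on the chart ball
  have hsd : ∀ x ∈ ball x₀ r, HasFDerivAt (sdist Ω) (e.comp (fderiv ℝ ψ x)) x := by
    intro x hx
    have hψx : HasFDerivAt ψ (fderiv ℝ ψ x) x :=
      ((hψ.contDiffAt (isOpen_ball.mem_nhds hx)).differentiableAt one_ne_zero).hasFDerivAt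
    have h1 : HasFDerivAt (fun y => e (ψ y)) (e.comp (fderiv ℝ ψ x)) x :=
      e.hasFDerivAt.comp x hψx
    refine h1.congr_of_eventuallyEq ?_
    filter_upwards [isOpen_ball.mem_nhds hx] with y hy
    exact (hψd y hy).symm
  have hn₀ := hn x₀ hx₀f
  have hFx₀ : HasFDerivAt (sdist Ω) ((InnerProductSpace.toDual ℝ (Euc N)) (-(n x₀))) x₀ :=
    hn₀.2.hasFDerivAt
  have hD₀ : e.comp (fderiv ℝ ψ x₀) = (InnerProductSpace.toDual ℝ (Euc N)) (-(n x₀)) :=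
    (hsd x₀ (mem_ball_self hr)).unique hFx₀
  -- uniform negativity of the drift against the normal at `x₀`
  obtain ⟨Mb, hMb⟩ := hbb
  have hbcont : Continuous fun α : A => b x₀ α :=
    hbc.comp (continuous_const.prodMk continuous_id)
  obtain ⟨α₀, -, hα₀⟩ := isCompact_univ.exists_isMaxOn univ_nonempty
    ((hbcont.inner continuous_const).continuousOn :
      ContinuousOn (fun α : A => ⟪b x₀ α, n x₀⟫) univ)
  set c : ℝ := -⟪b x₀ α₀, n x₀⟫ with hc
  have hc0 : 0 < c := by have := hx₀.2 α₀; simp only [hc]; linarith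
  have hble : ∀ α : A, ⟪b x₀ α, n x₀⟫ ≤ -c := by
    intro α; have := hα₀ (mem_univ α); simp only [hc, neg_neg]; exact this
  -- tube lemma: uniform-in-α continuity near x₀
  have hUopen : IsOpen {q : Euc N × A | ⟪b q.1 q.2, n x₀⟫ < -(c / 2)} :=
    isOpen_lt (hbc.inner continuous_const) continuous_const
  have hsubU : ({x₀} ×ˢ (univ : Set A)) ⊆ {q : Euc N × A | ⟪b q.1 q.2, n x₀⟫ < -(c / 2)} := by
    rintro ⟨y, α⟩ ⟨hy, -⟩
    simp only [mem_singleton_iff] at hy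
    subst hy
    have := hble α
    simp only [mem_setOf_eq]
    linarith
  obtain ⟨u, v, huo, -, hx₀u, hvv, huv⟩ :=
    generalized_tube_lemma isCompact_singleton isCompact_univ hUopen hsubU
  obtain ⟨δ₁, hδ₁, hδball⟩ := Metric.isOpen_iff.1 huo x₀ (hx₀u rfl)
  -- constants
  set M' : ℝ := max Mb 1 with hM'
  have hM'0 : 0 < M' := lt_of_lt_of_le one_pos (le_max_right _ _)
  have hbM' : ∀ y α, ‖b y α‖ ≤ M' := fun y α => (hMb y α).trans (le_max_left _ _)
  set L' : ℝ := (L : ℝ) + 1 with hL'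
  have hL'0 : 0 < L' := by positivity
  have hLL' : (L : ℝ) ≤ L' := by simp [hL']
  set δ₂ : ℝ := c / (4 * M' * L') with hδ₂def
  have hδ₂ : 0 < δ₂ := by positivity
  obtain ⟨hσ0, hσ1⟩ : σ ∈ Ioo (0 : ℝ) 1 := hM.1.2.1
  set β : ℝ := 1 - σ with hβdef
  have hβ : 0 < β := by simp only [hβdef]; linarith
  set ρ : ℝ := (c / (4 * Acst)) ^ β⁻¹ with hρdef
  have hρ : 0 < ρ := Real.rpow_pos_of_pos (by positivity) _
  refine ⟨min r (min δ₁ (min δ₂ ρ)), lt_min hr (lt_min hδ₁ (lt_min hδ₂ hρ)),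
    min_le_left _ _, ?_⟩
  set rt : ℝ := min r (min δ₁ (min δ₂ ρ)) with hrtdef
  intro ξ hξ hξ' x hx α
  obtain ⟨hxb, hxΩ⟩ := hx
  have hdist : dist x x₀ < rt / 2 := mem_ball.1 hxb
  have hdist0 : 0 ≤ dist x x₀ := dist_nonneg
  have hrtr : rt ≤ r := min_le_left _ _
  have hrtδ₁ : rt ≤ δ₁ := (min_le_right _ _).trans (min_le_left _ _)
  have hrtδ₂ : rt ≤ δ₂ := (min_le_right _ _).trans ((min_le_right _ _).trans (min_le_left _ _))
  have hrtρ : rt ≤ ρ := (min_le_right _ _).trans ((min_le_right _ _).trans (min_le_right _ _))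
  have hrt0 : 0 < rt := lt_min hr (lt_min hδ₁ (lt_min hδ₂ hρ))
  have hxr : x ∈ ball x₀ r := mem_ball.2 (by linarith)
  -- the signed distance at x
  have hd : sdist Ω x = infDist x Ωᶜ := by
    rw [sdist, infDist_zero_of_mem hxΩ, sub_zero]
  have hd0 : 0 < sdist Ω x := by
    rw [hd]
    exact (hopen.isClosed_compl.notMem_iff_infDist_pos ⟨x₀, hx₀c⟩).1 (by simpa using hxΩ)
  have hdle : sdist Ω x ≤ dist x x₀ := hd ▸ infDist_le_dist_of_mem hx₀c
  -- derivative estimate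
  set D : Euc N →L[ℝ] ℝ := e.comp (fderiv ℝ ψ x) with hDdef
  have hFx : HasFDerivAt (sdist Ω) D x := hsd x hxr
  have hop : ‖fderiv ℝ ψ x - fderiv ℝ ψ x₀‖ ≤ (L : ℝ) * dist x x₀ := by
    have h := hL.dist_le_mul x hxr x₀ (mem_ball_self hr)
    rwa [dist_eq_norm] at h
  have hdiffb : |(D - e.comp (fderiv ℝ ψ x₀)) (b x α)| ≤ M' * ((L : ℝ) * dist x x₀) := by
    have h1 : D - e.comp (fderiv ℝ ψ x₀) = e.comp (fderiv ℝ ψ x - fderiv ℝ ψ x₀) := by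
      rw [ContinuousLinearMap.comp_sub]
    rw [h1]
    have h2 : (e.comp (fderiv ℝ ψ x - fderiv ℝ ψ x₀)) (b x α)
        = ((fderiv ℝ ψ x - fderiv ℝ ψ x₀) (b x α)) i₀ := rfl
    rw [h2]
    calc |((fderiv ℝ ψ x - fderiv ℝ ψ x₀) (b x α)) i₀|
        ≤ ‖(fderiv ℝ ψ x - fderiv ℝ ψ x₀) (b x α)‖ := abs_coord_le_norm _ _
      _ ≤ ‖fderiv ℝ ψ x - fderiv ℝ ψ x₀‖ * ‖b x α‖ :=
          ContinuousLinearMap.le_opNorm _ _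
      _ ≤ ((L : ℝ) * dist x x₀) * M' :=
          mul_le_mul hop (hbM' x α) (norm_nonneg _)
            (by positivity)
      _ = M' * ((L : ℝ) * dist x x₀) := by ring
  have hD₀b : (e.comp (fderiv ℝ ψ x₀)) (b x α) = ⟪-(n x₀), b x α⟫ := by
    rw [hD₀]; exact InnerProductSpace.toDual_apply_apply
  have htube : ⟪b x α, n x₀⟫ < -(c / 2) := by
    have hxu : x ∈ u := hδball (mem_ball.2 (by linarith))
    exact huv (mk_mem_prod hxu (hvv (mem_univ α)))
  have hLip4 : M' * ((L : ℝ) * dist x x₀) ≤ c / 4 := by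
    have h3 : M' * ((L : ℝ) * dist x x₀) ≤ M' * (L' * δ₂) := by
      apply mul_le_mul_of_nonneg_left _ hM'0.le
      apply mul_le_mul hLL' (by linarith) hdist0 hL'0.le
    have h4 : M' * (L' * δ₂) = c / 4 := by
      rw [hδ₂def]; field_simp
    exact h3.trans (le_of_eq h4)
  have hkey : c / 4 ≤ D (b x α) := by
    have h2 : c / 2 < ⟪-(n x₀), b x α⟫ := by
      rw [inner_neg_left, real_inner_comm]; linarith
    have h5 : D (b x α) - (e.comp (fderiv ℝ ψ x₀)) (b x α)
        = (D - e.comp (fderiv ℝ ψ x₀)) (b x α) := by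
      simp [ContinuousLinearMap.sub_apply]
    have h6 := abs_le.1 hdiffb
    rw [hD₀b] at h5
    linarith [h6.1, h5]
  -- gradient of the blow-up function
  have hlog : HasFDerivAt (fun y => Real.log (sdist Ω y)) ((sdist Ω x)⁻¹ • D) x :=
    (Real.hasDerivAt_log hd0.ne').comp_hasFDerivAt x hFx
  have hU : HasFDerivAt (fun y => -Real.log (sdist Ω y) + (3 / 2) * Real.log r)
      (-((sdist Ω x)⁻¹ • D)) x := hlog.neg.add_const _
  have hgrad : gradient (fun y => -Real.log (sdist Ω y) + (3 / 2) * Real.log r) x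
      = (InnerProductSpace.toDual ℝ (Euc N)).symm (-((sdist Ω x)⁻¹ • D)) :=
    (hasFDerivAt_iff_hasGradientAt.1 hU).gradient
  have hinner : ⟪b x α,
      gradient (fun y => -Real.log (sdist Ω y) + (3 / 2) * Real.log r) x⟫
      = -((sdist Ω x)⁻¹ * D (b x α)) := by
    rw [hgrad, real_inner_comm, InnerProductSpace.toDual_symm_apply]
    simp
  -- nonlocal estimate
  have hIin : Iin Ω j g ξ (fun y => -Real.log (sdist Ω y) + (3 / 2) * Real.log r) x ≤
      Acst * sdist Ω x ^ (-σ) :=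
    hbound ξ hξ hξ' x ⟨mem_ball.2 (by linarith), hxΩ⟩
  -- size of d
  have hdρ : sdist Ω x ≤ ρ := hdle.trans (by linarith)
  have hdβ : sdist Ω x ^ β ≤ c / (4 * Acst) := by
    calc sdist Ω x ^ β ≤ ρ ^ β := Real.rpow_le_rpow hd0.le hdρ hβ.le
      _ = (c / (4 * Acst)) ^ (β⁻¹ * β) := by
          rw [Real.rpow_mul (by positivity)]
      _ = c / (4 * Acst) := by
          rw [inv_mul_cancel₀ hβ.ne', Real.rpow_one]
  have hrpow : sdist Ω x ^ (-σ) = sdist Ω x ^ β * (sdist Ω x)⁻¹ := by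
    rw [← Real.rpow_neg_one (sdist Ω x), ← Real.rpow_add hd0]
    congr 1
    simp only [hβdef]; ring
  have hfin : Acst * sdist Ω x ^ (-σ) ≤ (sdist Ω x)⁻¹ * (c / 4) := by
    rw [hrpow]
    have h7 : Acst * sdist Ω x ^ β ≤ c / 4 := by
      have := mul_le_mul_of_nonneg_left hdβ hA.le
      calc Acst * sdist Ω x ^ β ≤ Acst * (c / (4 * Acst)) := this
        _ = c / 4 := by field_simp
    calc Acst * (sdist Ω x ^ β * (sdist Ω x)⁻¹)
        = (Acst * sdist Ω x ^ β) * (sdist Ω x)⁻¹ := by ring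
      _ ≤ (c / 4) * (sdist Ω x)⁻¹ :=
          mul_le_mul_of_nonneg_right h7 (inv_nonneg.2 hd0.le)
      _ = (sdist Ω x)⁻¹ * (c / 4) := by ring
  -- conclusion
  rw [hinner, neg_neg]
  have h8 : (sdist Ω x)⁻¹ * (c / 4) ≤ (sdist Ω x)⁻¹ * D (b x α) :=
    mul_le_mul_of_nonneg_left hkey (inv_nonneg.2 hd0.le)
  linarith

end Censored

end
end
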